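/- arXiv:0904.2541 — 7 statements merged into one kernel-verified Lean document; each statement's English description precedes it below -/
import Mathlib

section
/- For every integer n ≥ 4 there exists an n-uniform hypergraph F with maximum degree at most 2^(n+2)/n on which Maker has a winning pairing strategy. -/
open Finset

/-- A (finite) hypergraph: a vertex set and a family of hyperedges. -/
structure FinHypergraph (α : Type*) where
  V : Finset α
  E : Finset (Finset α)

namespace FinHypergraph

variable {α : Type*} [DecidableEq α]

/-- `H` is an `n`-uniform hypergraph: every hyperedge is an `n`-element subset of `V`. -/
def IsUniform (H : FinHypergraph α) (n : ℕ) : Prop :=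
  (∀ e ∈ H.E, e ⊆ H.V) ∧ (∀ e ∈ H.E, e.card = n)

/-- The degree of a vertex: the number of hyperedges containing it. -/
def degree (H : FinHypergraph α) (v : α) : ℕ :=
  (H.E.filter fun e => v ∈ e).card

/-- The neighborhood size of a hyperedge `e`: the number of hyperedges `e' ≠ e`
meeting `e`. -/
def nbhdSize (H : FinHypergraph α) (e : Finset α) : ℕ :=
  (H.E.filter fun e' => e' ≠ e ∧ (e' ∩ e).Nonempty).card

/-- Maker has a winning pairing strategy on `H`: there are a first vertex `v₀ ∈ V` and
pairwise disjoint pairs from `V \ {v₀}` covering all but at most one vertex of `V \ {v₀}`,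
such that any set consisting of `v₀` together with exactly one vertex from each pair
contains a hyperedge. -/
def MakerPairingWin (H : FinHypergraph α) : Prop :=
  ∃ v₀ ∈ H.V, ∃ P : Finset (Finset α),
    (∀ p ∈ P, p.card = 2 ∧ p ⊆ H.V.erase v₀) ∧
    (∀ p ∈ P, ∀ q ∈ P, p ≠ q → Disjoint p q) ∧
    ((H.V.erase v₀) \ P.sup id).card ≤ 1 ∧
    (∀ S : Finset α, S ⊆ P.sup id → (∀ p ∈ P, (S ∩ p).card = 1) →
      ∃ e ∈ H.E, e ⊆ insert v₀ S)

/-- Maker has a winning *pure* pairing strategy on `H`: there are pairwise disjoint pairs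
of vertices covering all but at most one vertex of `V`, such that any set consisting of
exactly one vertex from each pair contains a hyperedge. -/
def MakerPurePairingWin (H : FinHypergraph α) : Prop :=
  ∃ P : Finset (Finset α),
    (∀ p ∈ P, p.card = 2 ∧ p ⊆ H.V) ∧
    (∀ p ∈ P, ∀ q ∈ P, p ≠ q → Disjoint p q) ∧
    (H.V \ P.sup id).card ≤ 1 ∧
    (∀ S : Finset α, S ⊆ P.sup id → (∀ p ∈ P, (S ∩ p).card = 1) →
      ∃ e ∈ H.E, e ⊆ S)

end FinHypergraph

/-- A literal: a variable (a natural number) together with a polarity. -/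
abbrev Lit : Type := ℕ × Bool

/-- A clause: a finite set of literals. -/
abbrev Clause : Type := Finset Lit

/-- A CNF formula: a finite set of clauses. -/
abbrev CnfFormula : Type := Finset Clause

/-- The literals of a clause are over pairwise distinct variables. -/
def distinctVars (C : Clause) : Prop :=
  ∀ l ∈ C, ∀ l' ∈ C, l.1 = l'.1 → l = l'

/-- A CNF formula is satisfiable if some assignment makes a literal of every clause true. -/
def CnfSatisfiable (F : CnfFormula) : Prop :=
  ∃ σ : ℕ → Bool, ∀ C ∈ F, ∃ l ∈ C, σ l.1 = l.2

/-- The number of clauses of `F` in which the variable `x` occurs (in either polarity). -/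
def varOcc (F : CnfFormula) (x : ℕ) : ℕ :=
  (F.filter fun C => ∃ b : Bool, (x, b) ∈ C).card

/-- The number of clauses of `F` in which the literal `l` occurs. -/
def litOcc (F : CnfFormula) (l : Lit) : ℕ :=
  (F.filter fun C => l ∈ C).card

/-- `F` is a `k`-CNF formula: every clause has exactly `k` literals over distinct variables. -/
def isKCNF (F : CnfFormula) (k : ℕ) : Prop :=
  ∀ C ∈ F, C.card = k ∧ distinctVars C

/-- The number of clauses of `F` distinct from `C` sharing a variable with `C`. -/
def clauseNbhd (F : CnfFormula) (C : Clause) : ℕ :=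
  (F.filter fun D => D ≠ C ∧ ∃ l ∈ C, ∃ b : Bool, (l.1, b) ∈ D).card

/-- The number of distinct variables of `F`. -/
def numVarsCnf (F : CnfFormula) : ℕ := (F.sup fun C => C.image Prod.fst).card

/-- `F` is minimal unsatisfiable. -/
def MinimalUnsat (F : CnfFormula) : Prop :=
  ¬ CnfSatisfiable F ∧ ∀ C ∈ F, CnfSatisfiable (F.erase C)

/-- `F` belongs to MU(1): minimal unsatisfiable with (#clauses) − (#variables) = 1. -/
def MU1 (F : CnfFormula) : Prop :=
  MinimalUnsat F ∧ F.card = numVarsCnf F + 1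

section MakerAux

def bval (l : List Bool) : ℕ := l.foldr (fun b m => 2 * m + cond b 1 0) 0
def encL (l : List Bool) : ℕ := l.foldr (fun b m => 2 * m + cond b 1 0) 1
def encV (p : List Bool × Bool) : ℕ := 2 * encL p.1 + cond p.2 1 0

lemma bval_cons (b : Bool) (t : List Bool) : bval (b :: t) = 2 * bval t + cond b 1 0 := rfl
lemma encL_cons (b : Bool) (t : List Bool) : encL (b :: t) = 2 * encL t + cond b 1 0 := rfl

lemma bval_lt (l : List Bool) : bval l < 2 ^ l.length := by
  induction l with
  | nil => simp [bval]
  | cons b t ih => cases b <;> simp [bval_cons, pow_succ] <;> omega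

lemma bval_inj : ∀ l₁ l₂ : List Bool, l₁.length = l₂.length → bval l₁ = bval l₂ → l₁ = l₂ := by
  intro l₁
  induction l₁ with
  | nil => intro l₂ h _; cases l₂ <;> simp_all
  | cons b t ih =>
    intro l₂ h hv
    cases l₂ with
    | nil => simp at h
    | cons b' t' =>
      simp only [List.length_cons, Nat.succ.injEq] at h
      have : b = b' ∧ bval t = bval t' := by
        cases b <;> cases b' <;> simp [bval_cons] at hv ⊢ <;> omega
      rw [this.1, ih t' h this.2]

lemma encL_pos (l : List Bool) : 1 ≤ encL l := by
  induction l with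
  | nil => simp [encL]
  | cons b t ih => cases b <;> simp [encL_cons]; omega

lemma encL_inj : ∀ l₁ l₂ : List Bool, encL l₁ = encL l₂ → l₁ = l₂ := by
  intro l₁
  induction l₁ with
  | nil =>
    intro l₂ h; cases l₂ with
    | nil => rfl
    | cons b' t' =>
      exfalso
      have h1 : (1 : ℕ) = 2 * encL t' + cond b' 1 0 := h
      have := encL_pos t'
      cases b' <;> simp at h1 <;> omega
  | cons b t ih =>
    intro l₂ h
    cases l₂ with
    | nil =>
      exfalso
      have h1 : 2 * encL t + cond b 1 0 = (1 : ℕ) := h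
      have := encL_pos t
      cases b <;> simp at h1 <;> omega
    | cons b' t' =>
      have h1 : 2 * encL t + cond b 1 0 = 2 * encL t' + cond b' 1 0 := h
      have : b = b' ∧ encL t = encL t' := by
        cases b <;> cases b' <;> simp at h1 ⊢ <;> omega
      rw [this.1, ih t' this.2]

lemma encV_inj : Function.Injective encV := by
  rintro ⟨l₁, b₁⟩ ⟨l₂, b₂⟩ h
  have : encL l₁ = encL l₂ ∧ b₁ = b₂ := by
    cases b₁ <;> cases b₂ <;> simp [encV] at h ⊢ <;> omega
  simp [encL_inj _ _ this.1, this.2]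

lemma two_le_encV (p : List Bool × Bool) : 2 ≤ encV p := by
  have := encL_pos p.1; cases p.2 <;> simp [encV] <;> omega

def EL : ℕ → Finset (List Bool)
  | 0 => {[]}
  | L + 1 => ((EL L).image (List.cons true)) ∪ ((EL L).image (List.cons false))

lemma mem_EL : ∀ (L : ℕ) (w : List Bool), w ∈ EL L ↔ w.length = L := by
  intro L
  induction L with
  | zero => intro w; simp [EL, List.length_eq_zero_iff]
  | succ L ih =>
    intro w
    cases w with
    | nil => simp [EL]
    | cons b t =>
      simp only [EL, mem_union, mem_image, ih, List.length_cons]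
      constructor
      · rintro (⟨a, ha, heq⟩ | ⟨a, ha, heq⟩) <;> (cases heq; omega)
      · intro h; cases b
        · right; exact ⟨t, by omega, rfl⟩
        · left; exact ⟨t, by omega, rfl⟩

lemma card_EL (L : ℕ) : (EL L).card ≤ 2 ^ L := by
  induction L with
  | zero => simp [EL]
  | succ L ih =>
    calc (EL (L+1)).card ≤ ((EL L).image (List.cons true)).card + ((EL L).image (List.cons false)).card :=
          card_union_le _ _
    _ ≤ 2 ^ L + 2 ^ L := Nat.add_le_add (le_trans (card_image_le) ih) (le_trans (card_image_le) ih)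
    _ = 2 ^ (L + 1) := by ring

def BLists (L : ℕ) : Finset (List Bool) := (Finset.range (L + 1)).biUnion EL

lemma mem_BLists {L : ℕ} {w : List Bool} : w ∈ BLists L ↔ w.length ≤ L := by
  simp only [BLists, mem_biUnion, mem_range, mem_EL]
  constructor
  · rintro ⟨i, hi, rfl⟩; omega
  · intro h; exact ⟨w.length, by omega, rfl⟩

def selv (n s : ℕ) (w : List Bool) : ℕ := bval ((w.drop (n - 1 - s)).take s)

def isLf (n s : ℕ) (w : List Bool) : Prop := w.length = (n - 1) + selv n s w

instance (n s : ℕ) (w : List Bool) : Decidable (isLf n s w) := by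
  unfold isLf; infer_instance

lemma selv_lt (n s : ℕ) (w : List Bool) : selv n s w < 2 ^ s := by
  refine lt_of_lt_of_le (bval_lt _) (Nat.pow_le_pow_right (by norm_num) ?_)
  simp [List.length_take]

lemma selv_prefix (n s : ℕ) (hs : s ≤ n - 1) {u w : List Bool} (hu : u <+: w)
    (hlen : n - 1 ≤ u.length) : selv n s u = selv n s w := by
  obtain ⟨r, rfl⟩ := hu
  unfold selv
  rw [List.drop_append_of_le_length (by omega),
      List.take_append_of_le_length (by rw [List.length_drop]; omega)]

def pathF (σ : List Bool → Bool) : ℕ → List Bool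
  | 0 => []
  | t + 1 => pathF σ t ++ [σ (pathF σ t)]

@[simp] lemma length_pathF (σ : List Bool → Bool) (t : ℕ) : (pathF σ t).length = t := by
  induction t with
  | zero => rfl
  | succ t ih => simp [pathF, ih]

lemma take_pathF (σ : List Bool → Bool) {t t' : ℕ} (h : t ≤ t') :
    (pathF σ t').take t = pathF σ t := by
  induction t' with
  | zero => have : t = 0 := by omega
            subst this; rfl
  | succ t' ih =>
    rcases Nat.lt_or_ge t (t' + 1) with h' | h'
    · show (pathF σ t' ++ [σ (pathF σ t')]).take t = pathF σ t
      rw [List.take_append_of_le_length (by rw [length_pathF]; omega), ih (by omega)]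
    · have : t = t' + 1 := by omega
      subst this
      exact List.take_of_length_le (by rw [length_pathF])

lemma getElem_pathF (σ : List Bool → Bool) {j t : ℕ} (h : j < t) :
    (pathF σ t)[j]'(by rw [length_pathF]; exact h) = σ (pathF σ j) := by
  induction t with
  | zero => omega
  | succ t ih =>
    show (pathF σ t ++ [σ (pathF σ t)])[j]'(by simp [length_pathF]; omega) = _
    rcases Nat.lt_or_ge j t with h' | h'
    · simp only [List.getElem_append_left (by rw [length_pathF]; exact h' : j < (pathF σ t).length)]
      exact ih h'
    · have hj : j = t := by omega
      subst hj
      have : (pathF σ j).length = j := length_pathF σ j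
      simp [List.getElem_append, this]

def edg (n : ℕ) (w : List Bool) (c : Bool) : Finset ℕ :=
  insert (encV (w, c))
    ((Finset.Ico (w.length - (n - 1)) w.length).image fun j => encV (w.take j, w.getD j false))

lemma mem_edg {n : ℕ} {w : List Bool} {c : Bool} {y : ℕ} :
    y ∈ edg n w c ↔ y = encV (w, c) ∨
      ∃ j, (w.length - (n - 1) ≤ j ∧ j < w.length) ∧ y = encV (w.take j, w.getD j false) := by
  simp only [edg, mem_insert, mem_image, mem_Ico]
  constructor
  · rintro (rfl | ⟨j, hj, rfl⟩)
    · exact Or.inl rfl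
    · exact Or.inr ⟨j, hj, rfl⟩
  · rintro (rfl | ⟨j, hj, rfl⟩)
    · exact Or.inl rfl
    · exact Or.inr ⟨j, hj, rfl⟩

lemma card_edg {n : ℕ} {w : List Bool} {c : Bool} (hn : 1 ≤ n) (h : n - 1 ≤ w.length) :
    (edg n w c).card = n := by
  have hinj : Set.InjOn (fun j => encV (w.take j, w.getD j false))
      (Finset.Ico (w.length - (n - 1)) w.length) := by
    intro j1 h1 j2 h2 he
    simp only [mem_coe, mem_Ico] at h1 h2
    have := encV_inj he
    simp only [Prod.mk.injEq] at this
    have h3 := congrArg List.length this.1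
    simp only [List.length_take] at h3
    omega
  have hnotmem : encV (w, c) ∉
      (Finset.Ico (w.length - (n - 1)) w.length).image fun j => encV (w.take j, w.getD j false) := by
    intro hmem
    obtain ⟨j, hj, he⟩ := mem_image.1 hmem
    rw [mem_Ico] at hj
    have := encV_inj he.symm
    simp only [Prod.mk.injEq] at this
    have h3 := congrArg List.length this.1
    simp only [List.length_take] at h3
    omega
  rw [edg, card_insert_of_notMem hnotmem, Finset.card_image_of_injOn hinj, Nat.card_Ico]
  omega
lemma two_pow_geom (t : ℕ) : ∑ v ∈ Finset.range t, 2 ^ v = 2 ^ t - 1 := by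
  induction t with
  | zero => simp
  | succ t ih =>
    rw [Finset.sum_range_succ, ih, pow_succ]
    have : 1 ≤ 2 ^ t := Nat.one_le_two_pow
    omega

lemma count_key (n s : ℕ) (hn : 4 ≤ n) (hA : 2 ^ s + s ≤ n - 1) (x : List Bool)
    (hx : 1 ≤ x.length) :
    ((BLists (n - 2 + 2 ^ s)).filter
      (fun w => isLf n s w ∧ x <+: w ∧ w.length ≤ x.length + (n - 2))).card
    ≤ 2 ^ (n - 1 - s) := by
  set δ := x.length with hδ
  set A := (BLists (n - 2 + 2 ^ s)).filter
      (fun w => isLf n s w ∧ x <+: w ∧ w.length ≤ x.length + (n - 2)) with hA'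
  have hsub : A ⊆ (Finset.range (2 ^ s)).biUnion
      (fun v => A.filter (fun w => selv n s w = v)) := by
    intro w hw
    rw [Finset.mem_biUnion]
    exact ⟨selv n s w, Finset.mem_range.2 (selv_lt n s w), Finset.mem_filter.2 ⟨hw, rfl⟩⟩
  -- per-v bound
  have perv : ∀ v ∈ Finset.range (2 ^ s),
      (A.filter (fun w => selv n s w = v)).card ≤ if v < δ then 2 ^ (n - 1 - s - δ + v) else 0 := by
    intro v hv
    by_cases hvδ : v < δ
    · simp only [hvδ, if_true]
      -- injection into EL (n-1-s-δ) ×ˢ EL v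
      have hcard : ((EL (n - 1 - s - δ)) ×ˢ (EL v)).card ≤ 2 ^ (n - 1 - s - δ + v) := by
        rw [Finset.card_product, pow_add]
        exact Nat.mul_le_mul (card_EL _) (card_EL _)
      refine le_trans (Finset.card_le_card_of_injOn
        (fun w => ((w.take (n - 1 - s)).drop δ, w.drop (n - 1))) ?_ ?_) hcard
      · -- maps to
        intro w hw
        simp only [A, Finset.mem_coe, Finset.mem_filter] at hw
        obtain ⟨⟨hwK, hlf, hpre, hwin⟩, hsel⟩ := hw
        have hlen : w.length = n - 1 + v := by rw [hlf, hsel]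
        simp only [Finset.mem_coe, Finset.mem_product, mem_EL, List.length_drop, List.length_take]
        constructor <;> omega
      · -- injective
        intro w hw w' hw' heq
        simp only [A, Finset.mem_coe, Finset.mem_filter] at hw hw'
        obtain ⟨⟨hwK, hlf, hpre, hwin⟩, hsel⟩ := hw
        obtain ⟨⟨hwK', hlf', hpre', hwin'⟩, hsel'⟩ := hw'
        have hlen : w.length = n - 1 + v := by rw [hlf, hsel]
        have hlen' : w'.length = n - 1 + v := by rw [hlf', hsel']
        simp only [Prod.mk.injEq] at heq
        obtain ⟨h1, h2⟩ := heq
        -- sel lists equal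
        have hsellist : (w.drop (n - 1 - s)).take s = (w'.drop (n - 1 - s)).take s := by
          apply bval_inj
          · simp only [List.length_take, List.length_drop]; omega
          · show selv n s w = selv n s w'
            rw [hsel, hsel']
        apply List.ext_getElem (by omega)
        intro i hi hi'
        rcases Nat.lt_or_ge i δ with hiδ | hiδ
        · rw [← hpre.getElem (by omega), ← hpre'.getElem (by omega)]
        · rcases Nat.lt_or_ge i (n - 1 - s) with hi1 | hi1
          · have e1 := congrArg (fun l => l.getD (i - δ) false) h1
            simp only [List.getD_eq_getElem?_getD, List.getElem?_drop, List.getElem?_take] at e1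
            have hix : δ + (i - δ) = i := by omega
            rw [hix] at e1
            simp only [hi1, if_pos] at e1
            rw [List.getElem?_eq_getElem hi, List.getElem?_eq_getElem hi'] at e1
            simpa using e1
          · rcases Nat.lt_or_ge i (n - 1) with hi2 | hi2
            · have e1 := congrArg (fun l => l.getD (i - (n - 1 - s)) false) hsellist
              simp only [List.getD_eq_getElem?_getD, List.getElem?_take, List.getElem?_drop] at e1
              have hix : n - 1 - s + (i - (n - 1 - s)) = i := by omega
              rw [hix] at e1
              simp only [show i - (n - 1 - s) < s by omega, if_pos] at e1
              rw [List.getElem?_eq_getElem hi, List.getElem?_eq_getElem hi'] at e1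
              simpa using e1
            · have e1 := congrArg (fun l => l.getD (i - (n - 1)) false) h2
              simp only [List.getD_eq_getElem?_getD, List.getElem?_drop] at e1
              have hix : n - 1 + (i - (n - 1)) = i := by omega
              rw [hix] at e1
              rw [List.getElem?_eq_getElem hi, List.getElem?_eq_getElem hi'] at e1
              simpa using e1
    · -- empty
      simp only [hvδ, if_false, Nat.le_zero, Finset.card_eq_zero]
      rw [Finset.eq_empty_iff_forall_notMem]
      intro w hw
      simp only [A, Finset.mem_filter] at hw
      obtain ⟨⟨hwK, hlf, hpre, hwin⟩, hsel⟩ := hw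
      rw [hlf, hsel] at hwin
      omega
  calc A.card ≤ ((Finset.range (2 ^ s)).biUnion (fun v => A.filter (fun w => selv n s w = v))).card :=
        Finset.card_le_card hsub
    _ ≤ ∑ v ∈ Finset.range (2 ^ s), (A.filter (fun w => selv n s w = v)).card :=
        Finset.card_biUnion_le
    _ ≤ ∑ v ∈ Finset.range (2 ^ s), (if v < δ then 2 ^ (n - 1 - s - δ + v) else 0) :=
        Finset.sum_le_sum perv
    _ = ∑ v ∈ (Finset.range (2 ^ s)).filter (fun v => v < δ), 2 ^ (n - 1 - s - δ + v) :=
        (Finset.sum_filter _ _).symm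
    _ = ∑ v ∈ Finset.range (min (2 ^ s) δ), 2 ^ (n - 1 - s - δ + v) := by
        congr 1
        ext v
        simp only [Finset.mem_filter, Finset.mem_range]
        omega
    _ = 2 ^ (n - 1 - s - δ) * ∑ v ∈ Finset.range (min (2 ^ s) δ), 2 ^ v := by
        rw [Finset.mul_sum]
        exact Finset.sum_congr rfl (fun v _ => pow_add 2 _ _)
    _ ≤ 2 ^ (n - 1 - s) := by
        rw [two_pow_geom]
        have hle : n - 1 - s - δ + min (2 ^ s) δ ≤ n - 1 - s := by
          have := Nat.lt_two_pow_self (n := s)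
          omega
        calc 2 ^ (n - 1 - s - δ) * (2 ^ min (2 ^ s) δ - 1)
            ≤ 2 ^ (n - 1 - s - δ) * 2 ^ min (2 ^ s) δ :=
              Nat.mul_le_mul_left _ (Nat.sub_le _ _)
          _ = 2 ^ (n - 1 - s - δ + min (2 ^ s) δ) := (pow_add 2 _ _).symm
          _ ≤ 2 ^ (n - 1 - s) := Nat.pow_le_pow_right (by norm_num) hle
lemma getD_eq {l : List Bool} {i : ℕ} (h : i < l.length) : l.getD i false = l[i] := by
  simp [List.getD_eq_getElem?_getD, List.getElem?_eq_getElem h]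

lemma take_succ_eq {w : List Bool} {j : ℕ} (h : j < w.length) :
    w.take (j + 1) = w.take j ++ [w[j]] := by
  rw [List.take_succ, List.getElem?_eq_getElem h]
  rfl

lemma prefix_of_take_getD {u : List Bool} {b : Bool} {w : List Bool} {j : ℕ}
    (hj : j < w.length) (hu : u = w.take j) (hb : b = w.getD j false) :
    u ++ [b] <+: w := by
  have : u ++ [b] = w.take (j + 1) := by
    rw [take_succ_eq hj, hu, hb, getD_eq hj]
  rw [this]
  exact List.take_prefix _ _

/-- leaves are pairwise non-comparable -/
lemma leaf_prefix_eq (n s : ℕ) (hs : s ≤ n - 1) {u w : List Bool}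
    (hu : isLf n s u) (hw : isLf n s w) (hpre : u <+: w) : u = w := by
  have h1 : n - 1 ≤ u.length := by rw [hu]; omega
  have h2 : selv n s u = selv n s w := selv_prefix n s hs hpre h1
  have h3 : u.length = w.length := by rw [hu, hw, h2]
  exact List.IsPrefix.eq_of_length hpre h3

end MakerAux

/-- For every `n ≥ 4` there is an `n`-uniform hypergraph with maximum degree at most
`2^(n+2)/n` on which Maker has a winning pairing strategy. -/
theorem maker_win_with_max_degree_four_two_pow_div_n (n : ℕ) (hn : 4 ≤ n) :
    ∃ H : FinHypergraph ℕ, H.IsUniform n ∧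
      (∀ v : ℕ, (H.degree v : ℝ) ≤ 2 ^ (n + 2) / (n : ℝ)) ∧
      H.MakerPairingWin := by
  classical
  -- choose the parameter s
  obtain ⟨s, hs1, hs2⟩ : ∃ s : ℕ, 2 ^ (s + 1) < n ∧ n ≤ 2 ^ (s + 2) := by
    have h2 : 2 ≤ Nat.clog 2 n := by
      have := (Nat.lt_clog_iff_pow_lt (by norm_num : (1:ℕ) < 2)).2
        (show 2 ^ 1 < n by omega)
      omega
    refine ⟨Nat.clog 2 n - 2, ?_, ?_⟩
    · have := (Nat.lt_clog_iff_pow_lt (by norm_num : (1:ℕ) < 2)).1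
        (show Nat.clog 2 n - 2 + 1 < Nat.clog 2 n by omega)
      exact this
    · have := Nat.le_pow_clog (by norm_num : (1:ℕ) < 2) n
      have heq : Nat.clog 2 n - 2 + 2 = Nat.clog 2 n := by omega
      rwa [heq]
  have hps : s < 2 ^ s := Nat.lt_two_pow_self (n := s)
  have hpow1 : 2 ^ (s + 1) = 2 * 2 ^ s := by ring
  have hA : 2 ^ s + s ≤ n - 1 := by omega
  have hsn : s ≤ n - 1 := by omega
  set Kk := n - 2 + 2 ^ s with hKk
  set W : Finset ℕ := ((BLists Kk) ×ˢ (Finset.univ : Finset Bool)).image encV with hW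
  set Lvs := (BLists Kk).filter (isLf n s) with hLvs
  set Egs : Finset (Finset ℕ) :=
    (Lvs ×ˢ (Finset.univ : Finset Bool)).image (fun p => edg n p.1 p.2) with hEgs
  have hmemW : ∀ (w : List Bool) (b : Bool), w.length ≤ Kk → encV (w, b) ∈ W := by
    intro w b hw
    refine Finset.mem_image.2 ⟨(w, b), ?_, rfl⟩
    rw [Finset.mem_product]
    exact ⟨mem_BLists.2 hw, Finset.mem_univ _⟩
  have f0 : (0 : ℕ) ∉ W := by
    intro h
    obtain ⟨p, _, hp⟩ := Finset.mem_image.1 h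
    have := two_le_encV p
    omega
  have hlenLf : ∀ w : List Bool, isLf n s w → n - 1 ≤ w.length := by
    intro w h; rw [h]; omega
  have hKLf : ∀ w : List Bool, isLf n s w → w.length ≤ Kk := by
    intro w h
    have := selv_lt n s w
    rw [h]; omega
  refine ⟨⟨insert 0 W, Egs⟩, ⟨?_, ?_⟩, ?_, ?_⟩
  · -- edges ⊆ V
    intro e he
    obtain ⟨p, hp, rfl⟩ := Finset.mem_image.1 he
    rw [Finset.mem_product, hLvs, Finset.mem_filter] at hp
    obtain ⟨⟨hwK, hlf⟩, -⟩ := hp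
    intro y hy
    rcases mem_edg.1 hy with rfl | ⟨j, hj, rfl⟩
    · exact Finset.mem_insert_of_mem (hmemW _ _ (mem_BLists.1 hwK))
    · refine Finset.mem_insert_of_mem (hmemW _ _ ?_)
      have := mem_BLists.1 hwK
      simp only [List.length_take]
      omega
  · -- card = n
    intro e he
    obtain ⟨p, hp, rfl⟩ := Finset.mem_image.1 he
    rw [Finset.mem_product, hLvs, Finset.mem_filter] at hp
    exact card_edg (by omega) (hlenLf _ hp.1.2)
  · -- degree bound
    intro v
    have hdeg : (FinHypergraph.mk (insert 0 W) Egs).degree v ≤ 2 ^ (n - s) := by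
      unfold FinHypergraph.degree
      simp only
      have step1 : Egs.filter (fun e => v ∈ e) ⊆
          (((Lvs ×ˢ (Finset.univ : Finset Bool)).filter
            (fun p => v ∈ edg n p.1 p.2)).image (fun p => edg n p.1 p.2)) := by
        intro e he
        rw [Finset.mem_filter] at he
        obtain ⟨he1, he2⟩ := he
        obtain ⟨p, hp, rfl⟩ := Finset.mem_image.1 he1
        exact Finset.mem_image.2 ⟨p, Finset.mem_filter.2 ⟨hp, he2⟩, rfl⟩
      refine le_trans (le_trans (Finset.card_le_card step1) Finset.card_image_le) ?_
      by_cases hv : ∃ u b, v = encV (u, b)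
      · obtain ⟨u, b, rfl⟩ := hv
        by_cases hu : isLf n s u
        · -- u is a leaf : at most one edge
          have hsub : ((Lvs ×ˢ (Finset.univ : Finset Bool)).filter
              (fun p => encV (u, b) ∈ edg n p.1 p.2)) ⊆ {(u, b)} := by
            intro p hp
            rw [Finset.mem_filter, Finset.mem_product, hLvs, Finset.mem_filter] at hp
            obtain ⟨⟨⟨hwK, hlf⟩, -⟩, hmem⟩ := hp
            rcases mem_edg.1 hmem with heq | ⟨j, hj, heq⟩
            · have h := encV_inj heq
              rw [Finset.mem_singleton]
              exact Prod.ext (congrArg Prod.fst h).symm (congrArg Prod.snd h).symm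
            · exfalso
              have h := encV_inj heq
              simp only [Prod.mk.injEq] at h
              have hpre : u ++ [b] <+: p.1 := prefix_of_take_getD hj.2 h.1 h.2
              have hpre' : u <+: p.1 := (List.prefix_append u [b]).trans hpre
              have heqw : u = p.1 := leaf_prefix_eq n s hsn hu hlf hpre'
              have hlenp := hpre.length_le
              rw [← heqw] at hlenp
              simp only [List.length_append, List.length_singleton] at hlenp
              omega
          refine le_trans (Finset.card_le_card hsub) ?_
          simp only [Finset.card_singleton]
          exact Nat.one_le_two_pow
        · -- u not a leaf : count via count_key
          have hsub : ((Lvs ×ˢ (Finset.univ : Finset Bool)).filter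
              (fun p => encV (u, b) ∈ edg n p.1 p.2)) ⊆
              ((BLists Kk).filter (fun w => isLf n s w ∧ (u ++ [b]) <+: w ∧
                w.length ≤ (u ++ [b]).length + (n - 2))) ×ˢ (Finset.univ : Finset Bool) := by
            intro p hp
            rw [Finset.mem_filter, Finset.mem_product, hLvs, Finset.mem_filter] at hp
            obtain ⟨⟨⟨hwK, hlf⟩, -⟩, hmem⟩ := hp
            rw [Finset.mem_product, Finset.mem_filter]
            rcases mem_edg.1 hmem with heq | ⟨j, hj, heq⟩
            · exfalso
              have := encV_inj heq
              simp only [Prod.mk.injEq] at this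
              exact hu (this.1 ▸ hlf)
            · have := encV_inj heq
              simp only [Prod.mk.injEq] at this
              have hju : u.length = j := by
                rw [this.1]; simp only [List.length_take]; omega
              refine ⟨⟨hwK, hlf, prefix_of_take_getD hj.2 this.1 this.2, ?_⟩, Finset.mem_univ _⟩
              simp only [List.length_append, List.length_singleton]
              omega
          refine le_trans (Finset.card_le_card hsub) ?_
          rw [Finset.card_product]
          have hck := count_key n s hn hA (u ++ [b]) (by simp)
          calc _ ≤ 2 ^ (n - 1 - s) * 2 := by
                refine Nat.mul_le_mul hck ?_
                simp [Finset.card_univ]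
          _ = 2 ^ (n - s) := by
                rw [← pow_succ]
                congr 1
                omega
      · -- v is not an encoded vertex at all
        have : ((Lvs ×ˢ (Finset.univ : Finset Bool)).filter
            (fun p => v ∈ edg n p.1 p.2)) = ∅ := by
          rw [Finset.eq_empty_iff_forall_notMem]
          rintro ⟨w, c⟩ hp
          rw [Finset.mem_filter] at hp
          rcases mem_edg.1 hp.2 with heq | ⟨j, hj, heq⟩
          · exact hv ⟨w, c, heq⟩
          · exact hv ⟨_, _, heq⟩
        rw [this]
        simp
    -- now the real-number inequality
    have hnat : 2 ^ (n - s) * n ≤ 2 ^ (n + 2) := by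
      calc 2 ^ (n - s) * n ≤ 2 ^ (n - s) * 2 ^ (s + 2) := Nat.mul_le_mul_left _ hs2
        _ = 2 ^ (n - s + (s + 2)) := (pow_add 2 _ _).symm
        _ = 2 ^ (n + 2) := by congr 1; omega
    have hn0 : (0 : ℝ) < (n : ℝ) := by positivity
    rw [le_div_iff₀ hn0]
    calc ((FinHypergraph.mk (insert 0 W) Egs).degree v : ℝ) * n
        ≤ (2 ^ (n - s) : ℕ) * (n : ℝ) := by
          exact mul_le_mul_of_nonneg_right (by exact_mod_cast hdeg) (le_of_lt hn0)
      _ ≤ 2 ^ (n + 2) := by exact_mod_cast hnat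
  · -- MakerPairingWin
    refine ⟨0, Finset.mem_insert_self _ _,
      (BLists Kk).image (fun w => ({encV (w, false), encV (w, true)} : Finset ℕ)), ?_, ?_, ?_, ?_⟩
    · -- pairs : card 2 and within V \ {v₀}
      intro p hp
      obtain ⟨w, hw, rfl⟩ := Finset.mem_image.1 hp
      constructor
      · refine Finset.card_pair ?_
        intro h
        have := encV_inj h
        simp at this
      · intro y hy
        have hyW : y ∈ W := by
          rcases Finset.mem_insert.1 hy with rfl | hy'
          · exact hmemW _ _ (mem_BLists.1 hw)
          · rw [Finset.mem_singleton.1 hy']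
            exact hmemW _ _ (mem_BLists.1 hw)
        refine Finset.mem_erase.2 ⟨?_, Finset.mem_insert_of_mem hyW⟩
        intro h0
        rw [h0] at hyW
        exact f0 hyW
    · -- pairwise disjoint
      intro p hp q hq hpq
      obtain ⟨w, hw, rfl⟩ := Finset.mem_image.1 hp
      obtain ⟨w', hw', rfl⟩ := Finset.mem_image.1 hq
      rw [Finset.disjoint_left]
      intro a ha ha'
      have hww' : w = w' := by
        rcases Finset.mem_insert.1 ha with rfl | h1 <;>
          rcases Finset.mem_insert.1 ha' with h2 | h2
        · exact (congrArg Prod.fst (encV_inj h2.symm)).symm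
        · exact (congrArg Prod.fst (encV_inj (Finset.mem_singleton.1 h2).symm)).symm
        · rw [Finset.mem_singleton.1 h1] at h2
          exact (congrArg Prod.fst (encV_inj h2.symm)).symm
        · rw [Finset.mem_singleton.1 h1] at h2
          exact (congrArg Prod.fst (encV_inj (Finset.mem_singleton.1 h2).symm)).symm
      exact hpq (by rw [hww'])
    · -- covers everything
      have hsup : ((BLists Kk).image
          (fun w => ({encV (w, false), encV (w, true)} : Finset ℕ))).sup id = W := by
        apply le_antisymm
        · refine Finset.sup_le ?_
          intro p hp
          obtain ⟨w, hw, rfl⟩ := Finset.mem_image.1 hp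
          simp only [id]
          intro y hy
          rcases Finset.mem_insert.1 hy with rfl | hy'
          · exact hmemW _ _ (mem_BLists.1 hw)
          · rw [Finset.mem_singleton.1 hy']
            exact hmemW _ _ (mem_BLists.1 hw)
        · intro y hy
          obtain ⟨⟨w, b⟩, hwb, rfl⟩ := Finset.mem_image.1 hy
          rw [Finset.mem_product] at hwb
          have hp : ({encV (w, false), encV (w, true)} : Finset ℕ) ∈
              ((BLists Kk).image (fun w => ({encV (w, false), encV (w, true)} : Finset ℕ))) :=
            Finset.mem_image.2 ⟨w, hwb.1, rfl⟩
          have hle := Finset.le_sup (f := id) hp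
          refine hle ?_
          cases b
          · exact Finset.mem_insert_self _ _
          · exact Finset.mem_insert_of_mem (Finset.mem_singleton_self _)
      rw [hsup, Finset.erase_insert f0, Finset.sdiff_self]
      simp
    · -- the key covering property
      intro S hS hcards
      set σ : List Bool → Bool := fun w => decide (encV (w, true) ∈ S) with hσdef
      have hσ : ∀ w : List Bool, w.length ≤ Kk → encV (w, σ w) ∈ S := by
        intro w hw
        have hp : ({encV (w, false), encV (w, true)} : Finset ℕ) ∈
            ((BLists Kk).image (fun w => ({encV (w, false), encV (w, true)} : Finset ℕ))) :=
          Finset.mem_image.2 ⟨w, mem_BLists.2 hw, rfl⟩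
        have h1 := hcards _ hp
        by_cases ht : encV (w, true) ∈ S
        · have : σ w = true := by simp [hσdef, ht]
          rw [this]; exact ht
        · have hσf : σ w = false := by simp [hσdef, ht]
          rw [hσf]
          obtain ⟨y, hy⟩ := Finset.card_pos.1 (by rw [h1]; norm_num)
          obtain ⟨hyS, hyp⟩ := Finset.mem_inter.1 hy
          rcases Finset.mem_insert.1 hyp with rfl | hy'
          · exact hyS
          · rw [Finset.mem_singleton.1 hy'] at hyS
            exact absurd hyS ht
      set v1 := selv n s (pathF σ (n - 1)) with hv1
      set wstar := pathF σ ((n - 1) + v1) with hwstar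
      have hlenw : wstar.length = (n - 1) + v1 := length_pathF _ _
      have hpre : pathF σ (n - 1) <+: wstar := by
        rw [← take_pathF σ (show n - 1 ≤ (n - 1) + v1 by omega)]
        exact List.take_prefix _ _
      have hself : selv n s wstar = v1 := by
        rw [hv1]
        exact (selv_prefix n s hsn hpre (by rw [length_pathF])).symm
      have hlf : isLf n s wstar := by rw [isLf, hlenw, hself]
      have hKw : wstar.length ≤ Kk := hKLf _ hlf
      refine ⟨edg n wstar (σ wstar), ?_, ?_⟩
      · refine Finset.mem_image.2 ⟨(wstar, σ wstar), ?_, rfl⟩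
        rw [Finset.mem_product, hLvs, Finset.mem_filter]
        exact ⟨⟨mem_BLists.2 hKw, hlf⟩, Finset.mem_univ _⟩
      · intro y hy
        rcases mem_edg.1 hy with rfl | ⟨j, hj, rfl⟩
        · exact Finset.mem_insert_of_mem (hσ _ hKw)
        · refine Finset.mem_insert_of_mem ?_
          have hjlen : j < wstar.length := hj.2
          have h1 : wstar.take j = pathF σ j := take_pathF σ (by omega)
          have h2 : wstar.getD j false = σ (pathF σ j) := by
            rw [getD_eq hjlen]
            exact getElem_pathF σ (show j < (n - 1) + v1 by omega)
          rw [h1, h2]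
          exact hσ _ (by rw [length_pathF]; omega)
end

section
/- For every n-uniform hypergraph F whose maximum degree is at most 2^(n-2)/(e·n), where e denotes Euler's number (e = exp 1), there exists a proper halving 2-coloring, i.e. a 2-coloring of the vertices of F in which no hyperedge is monochromatic and the sizes of the two color classes differ by at most 1. -/
open Finset

set_option maxHeartbeats 1000000

namespace LLLcore
variable {m : ℕ}

/-- `A` is determined by coordinates in `S`. -/
def Det (S : Finset (Fin m)) (A : Finset (Fin m → Bool)) : Prop :=
  ∀ σ τ : Fin m → Bool, (∀ j ∈ S, σ j = τ j) → σ ∈ A → τ ∈ A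

lemma card_univ_bool : (univ : Finset (Fin m → Bool)).card = 2 ^ m := by
  simp [Fintype.card_fun]

lemma indep {A B : Finset (Fin m → Bool)} {S T : Finset (Fin m)}
    (hA : Det S A) (hB : Det T B) (hST : ∀ j ∈ T, j ∉ S) :
    (A ∩ B).card * 2 ^ m = A.card * B.card := by
  classical
  have key : ((A ∩ B) ×ˢ (univ : Finset (Fin m → Bool))).card = (A ×ˢ B).card := by
    apply Finset.card_nbij'
      (i := fun p => (fun j => if j ∈ S then p.1 j else p.2 j,
                      fun j => if j ∈ S then p.2 j else p.1 j))
      (j := fun p => (fun j => if j ∈ S then p.1 j else p.2 j,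
                      fun j => if j ∈ S then p.2 j else p.1 j))
    · rintro ⟨σ, τ⟩ hp
      have h1 : σ ∈ A ∩ B := (mem_product.mp hp).1
      have hA1 : σ ∈ A := mem_inter.mp h1 |>.1
      have hB1 : σ ∈ B := mem_inter.mp h1 |>.2
      refine mem_product.mpr ⟨?_, ?_⟩
      · exact hA σ _ (fun j hj => by simp [hj]) hA1
      · exact hB σ _ (fun j hj => by simp [hST j hj]) hB1
    · rintro ⟨σ, τ⟩ hp
      have hA1 : σ ∈ A := (mem_product.mp hp).1
      have hB1 : τ ∈ B := (mem_product.mp hp).2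
      refine mem_product.mpr ⟨mem_inter.mpr ⟨?_, ?_⟩, mem_univ _⟩
      · exact hA σ _ (fun j hj => by simp [hj]) hA1
      · exact hB τ _ (fun j hj => by simp [hST j hj]) hB1
    · rintro ⟨σ, τ⟩ _
      refine Prod.ext ?_ ?_ <;> · funext j; by_cases hj : j ∈ S <;> simp [hj]
    · rintro ⟨σ, τ⟩ _
      refine Prod.ext ?_ ?_ <;> · funext j; by_cases hj : j ∈ S <;> simp [hj]
  rw [card_product, card_product, card_univ_bool] at key
  rw [key, mul_comm]

lemma pinned_card (J : Finset (Fin m)) (pol : Fin m → Bool) :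
    (univ.filter fun σ : Fin m → Bool => ∀ j ∈ J, σ j = pol j).card * 2 ^ J.card = 2 ^ m := by
  classical
  induction J using Finset.induction_on with
  | empty => simp [card_univ_bool]
  | @insert a J ha ih =>
    set P := univ.filter fun σ : Fin m → Bool => ∀ j ∈ J, σ j = pol j with hP
    have hsplit : (univ.filter fun σ : Fin m → Bool => ∀ j ∈ insert a J, σ j = pol j)
        = P.filter fun σ => σ a = pol a := by
      ext σ
      simp only [hP, mem_filter, mem_univ, true_and, Finset.forall_mem_insert]
      tauto
    have hflip : (P.filter fun σ => σ a = pol a).card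
        = (P.filter fun σ => ¬ σ a = pol a).card := by
      apply Finset.card_nbij' (i := fun σ => Function.update σ a (!σ a))
        (j := fun σ => Function.update σ a (!σ a))
      · intro σ hσ
        simp only [hP, Finset.mem_coe, mem_filter, mem_univ, true_and] at hσ ⊢
        obtain ⟨h1, h2⟩ := hσ
        refine ⟨fun j hj => ?_, ?_⟩
        · rw [Function.update_of_ne (by rintro rfl; exact ha hj)]; exact h1 j hj
        · simp [Function.update_self, h2, Bool.not_eq_self]
      · intro σ hσ
        simp only [hP, Finset.mem_coe, mem_filter, mem_univ, true_and] at hσ ⊢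
        obtain ⟨h1, h2⟩ := hσ
        refine ⟨fun j hj => ?_, ?_⟩
        · rw [Function.update_of_ne (by rintro rfl; exact ha hj)]; exact h1 j hj
        · have : σ a = !pol a := by
            cases hsa : σ a <;> cases hpa : pol a <;> simp_all
          simp [Function.update_self, this]
      · intro σ _
        funext j
        by_cases hj : j = a
        · subst hj; simp [Function.update_self]
        · simp [Function.update_of_ne hj]
      · intro σ _
        funext j
        by_cases hj : j = a
        · subst hj; simp [Function.update_self]
        · simp [Function.update_of_ne hj]
    have hPsum : (P.filter fun σ => σ a = pol a).card
        + (P.filter fun σ => ¬ σ a = pol a).card = P.card :=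
      Finset.card_filter_add_card_filter_not _
    rw [hsplit, Finset.card_insert_of_notMem ha, pow_succ]
    calc (P.filter fun σ => σ a = pol a).card * (2 ^ J.card * 2)
        = ((P.filter fun σ => σ a = pol a).card
          + (P.filter fun σ => ¬ σ a = pol a).card) * 2 ^ J.card := by
          rw [← hflip]; ring
      _ = P.card * 2 ^ J.card := by rw [hPsum]
      _ = 2 ^ m := ih


section
variable {ι : Type*} [Fintype ι] [DecidableEq ι]

/-- Assignments avoiding all events in `T`. -/
def Av (A : ι → Finset (Fin m → Bool)) (T : Finset ι) : Finset (Fin m → Bool) :=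
  univ.filter fun σ => ∀ i ∈ T, σ ∉ A i

lemma Av_insert (A : ι → Finset (Fin m → Bool)) (a : ι) (T : Finset ι) :
    Av A (insert a T) = Av A T \ A a := by
  ext σ; simp only [Av, mem_filter, mem_univ, true_and, mem_sdiff, Finset.forall_mem_insert]
  tauto

lemma Av_anti (A : ι → Finset (Fin m → Bool)) {U T : Finset ι} (h : U ⊆ T) :
    Av A T ⊆ Av A U := by
  intro σ hσ
  simp only [Av, mem_filter, mem_univ, true_and] at hσ ⊢
  exact fun i hi => hσ i (h hi)

lemma Av_det (A : ι → Finset (Fin m → Bool)) (vbl : ι → Finset (Fin m))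
    (hdet : ∀ i, Det (vbl i) (A i)) (T : Finset ι) :
    Det (T.biUnion vbl) (Av A T) := by
  intro σ τ hagree hσ
  simp only [Av, mem_filter, mem_univ, true_and] at hσ ⊢
  intro i hi hτ
  refine hσ i hi (hdet i τ σ (fun j hj => ?_) hτ)
  exact (hagree j (Finset.mem_biUnion.mpr ⟨i, hi, hj⟩)).symm

lemma lll_key (A : ι → Finset (Fin m → Bool)) (vbl : ι → Finset (Fin m))
    (hdet : ∀ i, Det (vbl i) (A i)) (x : ℝ) (hx0 : 0 < x) (hx1 : x < 1) (D : ℕ)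
    (hD : ∀ i : ι, (univ.filter fun j => j ≠ i ∧ (vbl j ∩ vbl i).Nonempty).card ≤ D)
    (hp : ∀ i, ((A i).card : ℝ) ≤ x * (1-x)^D * 2^m) :
    ∀ k, ∀ T : Finset ι, T.card ≤ k → ∀ i, i ∉ T →
      ((A i ∩ Av A T).card : ℝ) ≤ x * (Av A T).card := by
  have h1x0 : (0:ℝ) ≤ 1 - x := by linarith
  have h1x1 : (1:ℝ) - x ≤ 1 := by linarith
  intro k
  induction k with
  | zero =>
    intro T hT i _
    have hTe : T = ∅ := Finset.card_eq_zero.mp (Nat.le_zero.mp hT)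
    subst hTe
    have hAv : Av A (∅ : Finset ι) = univ := by simp [Av]
    rw [hAv]
    calc ((A i ∩ univ).card : ℝ) = (A i).card := by rw [Finset.inter_univ]
      _ ≤ x * (1-x)^D * 2^m := hp i
      _ ≤ x * 1 * 2^m := by
          have h : ((1:ℝ)-x)^D ≤ 1 := pow_le_one₀ h1x0 h1x1
          have h2 : x * (1-x)^D ≤ x * 1 := mul_le_mul_of_nonneg_left h hx0.le
          exact mul_le_mul_of_nonneg_right h2 (by positivity)
      _ = x * (univ : Finset (Fin m → Bool)).card := by
          rw [card_univ_bool]; push_cast; ring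
  | succ k ih =>
    intro T hT i hiT
    set T1 := T.filter (fun j => (vbl j ∩ vbl i).Nonempty) with hT1
    set T2 := T.filter (fun j => ¬ (vbl j ∩ vbl i).Nonempty) with hT2
    have hT12 : T1 ∪ T2 = T := Finset.filter_union_filter_not_eq _ T
    -- the growth claim
    have grow : ∀ S : Finset ι, S ⊆ T1 →
        ((1-x)^S.card * (Av A T2).card : ℝ) ≤ ((Av A (T2 ∪ S)).card : ℝ) := by
      intro S
      induction S using Finset.induction_on with
      | empty => intro _; simp
      | @insert a S ha ihS =>
        intro hins
        have haT1 : a ∈ T1 := hins (Finset.mem_insert_self a S)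
        have hST1 : S ⊆ T1 := fun y hy => hins (Finset.mem_insert_of_mem hy)
        have haT : a ∈ T := (Finset.mem_filter.mp haT1).1
        have haU : a ∉ T2 ∪ S := by
          simp only [Finset.mem_union]
          rintro (h | h)
          · exact (Finset.mem_filter.mp h).2 (Finset.mem_filter.mp haT1).2
          · exact ha h
        have hUsub : T2 ∪ S ⊆ T := by
          apply Finset.union_subset (Finset.filter_subset _ _)
          exact fun y hy => (Finset.mem_filter.mp (hST1 hy)).1
        have hUcard : (T2 ∪ S).card ≤ k := by
          have h1 : T2 ∪ S ⊆ T.erase a := Finset.subset_erase.mpr ⟨hUsub, haU⟩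
          have h2 := Finset.card_le_card h1
          rw [Finset.card_erase_of_mem haT] at h2
          omega
        have hkey := ih (T2 ∪ S) hUcard a haU
        have heq : Av A (T2 ∪ insert a S) = Av A (T2 ∪ S) \ A a := by
          rw [Finset.union_insert, Av_insert]
        have hcard : ((Av A (T2 ∪ S) \ A a).card : ℝ)
            = ((Av A (T2 ∪ S)).card : ℝ) - ((Av A (T2 ∪ S) ∩ A a).card : ℝ) := by
          have := Finset.card_inter_add_card_sdiff (Av A (T2 ∪ S)) (A a)
          push_cast [← this]; ring
        have hint : ((Av A (T2 ∪ S) ∩ A a).card : ℝ) ≤ x * ((Av A (T2 ∪ S)).card : ℝ) := by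
          rw [Finset.inter_comm]; exact hkey
        have hgs := ihS hST1
        rw [heq, hcard, Finset.card_insert_of_notMem ha, pow_succ]
        have hAvcard : (0:ℝ) ≤ ((Av A (T2 ∪ S)).card : ℝ) := Nat.cast_nonneg _
        nlinarith
    -- main chain
    have hAvsub : Av A T ⊆ Av A T2 := Av_anti A (Finset.filter_subset _ _)
    have c1 : ((A i ∩ Av A T).card : ℝ) ≤ ((A i ∩ Av A T2).card : ℝ) := by
      exact_mod_cast Finset.card_le_card (Finset.inter_subset_inter (le_refl _) hAvsub)
    have hdisj : ∀ j ∈ T2.biUnion vbl, j ∉ vbl i := by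
      intro j hj
      obtain ⟨j', hj', hjv⟩ := Finset.mem_biUnion.mp hj
      have hne := (Finset.mem_filter.mp hj').2
      intro hji
      exact hne ⟨j, Finset.mem_inter.mpr ⟨hjv, hji⟩⟩
    have c2 : ((A i ∩ Av A T2).card : ℝ) * 2^m = ((A i).card : ℝ) * ((Av A T2).card : ℝ) := by
      have := indep (hdet i) (Av_det A vbl hdet T2) hdisj
      exact_mod_cast this
    have hpow : (0:ℝ) < 2^m := by positivity
    have c3 : ((A i ∩ Av A T2).card : ℝ) ≤ x * (1-x)^D * ((Av A T2).card : ℝ) := by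
      have h1 : ((A i ∩ Av A T2).card : ℝ) * 2^m ≤ (x * (1-x)^D * 2^m) * ((Av A T2).card : ℝ) := by
        rw [c2]
        exact mul_le_mul_of_nonneg_right (hp i) (Nat.cast_nonneg _)
      calc ((A i ∩ Av A T2).card : ℝ) = ((A i ∩ Av A T2).card : ℝ) * 2^m / 2^m := by
            field_simp
        _ ≤ (x * (1-x)^D * 2^m) * ((Av A T2).card : ℝ) / 2^m := by
            gcongr
        _ = x * (1-x)^D * ((Av A T2).card : ℝ) := by field_simp
    have hT1D : T1.card ≤ D := by
      refine le_trans (Finset.card_le_card ?_) (hD i)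
      intro j hj
      have hjT := (Finset.mem_filter.mp hj).1
      have hjv := (Finset.mem_filter.mp hj).2
      refine Finset.mem_filter.mpr ⟨Finset.mem_univ _, ?_, hjv⟩
      rintro rfl; exact hiT hjT
    have c4 : ((1:ℝ)-x)^D ≤ (1-x)^T1.card := pow_le_pow_of_le_one h1x0 h1x1 hT1D
    have c5 : ((1-x)^T1.card * (Av A T2).card : ℝ) ≤ ((Av A T).card : ℝ) := by
      have := grow T1 (le_refl _)
      rwa [show T2 ∪ T1 = T by rw [Finset.union_comm]; exact hT12] at this
    have hAv2 : (0:ℝ) ≤ ((Av A T2).card : ℝ) := Nat.cast_nonneg _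
    calc ((A i ∩ Av A T).card : ℝ) ≤ ((A i ∩ Av A T2).card : ℝ) := c1
      _ ≤ x * (1-x)^D * ((Av A T2).card : ℝ) := c3
      _ ≤ x * ((1-x)^T1.card * ((Av A T2).card : ℝ)) := by
          have h := mul_le_mul_of_nonneg_right c4 hAv2
          have := mul_le_mul_of_nonneg_left h hx0.le
          calc x * (1-x)^D * ((Av A T2).card : ℝ)
              = x * ((1-x)^D * ((Av A T2).card : ℝ)) := by ring
            _ ≤ x * ((1-x)^T1.card * ((Av A T2).card : ℝ)) := this
      _ ≤ x * ((Av A T).card : ℝ) := by nlinarith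

lemma lll (A : ι → Finset (Fin m → Bool)) (vbl : ι → Finset (Fin m))
    (hdet : ∀ i, Det (vbl i) (A i)) (x : ℝ) (hx0 : 0 < x) (hx1 : x < 1) (D : ℕ)
    (hD : ∀ i : ι, (univ.filter fun j => j ≠ i ∧ (vbl j ∩ vbl i).Nonempty).card ≤ D)
    (hp : ∀ i, ((A i).card : ℝ) ≤ x * (1-x)^D * 2^m) :
    ∃ σ : Fin m → Bool, ∀ i, σ ∉ A i := by
  have h1x0 : (0:ℝ) < 1 - x := by linarith
  have key := lll_key A vbl hdet x hx0 hx1 D hD hp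
  have grow : ∀ T : Finset ι, ((1-x)^T.card * 2^m : ℝ) ≤ ((Av A T).card : ℝ) := by
    intro T
    induction T using Finset.induction_on with
    | empty => simp [Av, card_univ_bool]
    | @insert a T ha ih =>
      have hkey := key T.card T (le_refl _) a ha
      have heq : Av A (insert a T) = Av A T \ A a := Av_insert A a T
      have hcard : ((Av A T \ A a).card : ℝ)
          = ((Av A T).card : ℝ) - ((Av A T ∩ A a).card : ℝ) := by
        have := Finset.card_inter_add_card_sdiff (Av A T) (A a)
        push_cast [← this]; ring
      have hint : ((Av A T ∩ A a).card : ℝ) ≤ x * ((Av A T).card : ℝ) := by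
        rw [Finset.inter_comm]; exact hkey
      rw [heq, hcard, Finset.card_insert_of_notMem ha, pow_succ]
      nlinarith
  have hpos : (0:ℝ) < ((Av A univ).card : ℝ) := by
    have := grow univ
    have : (0:ℝ) < (1-x)^(univ : Finset ι).card * 2^m := by positivity
    linarith [grow univ]
  obtain ⟨σ, hσ⟩ := Finset.card_pos.mp (by exact_mod_cast hpos)
  refine ⟨σ, fun i => ?_⟩
  have := (Finset.mem_filter.mp hσ).2
  exact this i (Finset.mem_univ i)

end

end LLLcore


namespace HGaux
variable (H : FinHypergraph ℕ)

/-- number of pairs -/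
def mm : ℕ := H.V.card / 2

noncomputable def gV (k : Fin H.V.card) : ℕ := ((H.V.equivFin.symm k : ℕ))

lemma gV_mem (k : Fin H.V.card) : gV H k ∈ H.V := (H.V.equivFin.symm k).2

lemma gV_inj : Function.Injective (gV H) := fun k l h =>
  H.V.equivFin.symm.injective (Subtype.ext h)

lemma two_mm_le : 2 * mm H ≤ H.V.card := by
  have := Nat.div_add_mod H.V.card 2
  have h2 := Nat.mod_lt H.V.card (show 0 < 2 by norm_num)
  unfold mm; omega

lemma le_two_mm : H.V.card ≤ 2 * mm H + 1 := by
  have := Nat.div_add_mod H.V.card 2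
  have h2 := Nat.mod_lt H.V.card (show 0 < 2 by norm_num)
  unfold mm; omega

noncomputable def aV (i : Fin (mm H)) : ℕ := gV H ⟨2*i.val, by have := two_mm_le H; omega⟩
noncomputable def bV (i : Fin (mm H)) : ℕ := gV H ⟨2*i.val+1, by have := two_mm_le H; omega⟩

lemma aV_mem (i : Fin (mm H)) : aV H i ∈ H.V := gV_mem H _
lemma bV_mem (i : Fin (mm H)) : bV H i ∈ H.V := gV_mem H _

lemma aV_inj {i j : Fin (mm H)} (h : aV H i = aV H j) : i = j := by
  have := gV_inj H h
  have := Fin.val_eq_of_eq this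
  simp only at this
  exact Fin.ext (by omega)

lemma bV_inj {i j : Fin (mm H)} (h : bV H i = bV H j) : i = j := by
  have := gV_inj H h
  have := Fin.val_eq_of_eq this
  simp only at this
  exact Fin.ext (by omega)

lemma aV_ne_bV (i j : Fin (mm H)) : aV H i ≠ bV H j := by
  intro h
  have := gV_inj H h
  have := Fin.val_eq_of_eq this
  simp only at this
  omega

/-- index of a vertex -/
noncomputable def kOf (v : ℕ) (h : v ∈ H.V) : Fin H.V.card := H.V.equivFin ⟨v, h⟩

lemma kOf_gV (k : Fin H.V.card) (h : gV H k ∈ H.V) : kOf H (gV H k) h = k := by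
  unfold kOf gV
  have : (⟨((H.V.equivFin.symm k : ℕ)), h⟩ : {x // x ∈ H.V}) = H.V.equivFin.symm k :=
    Subtype.ext rfl
  rw [this, Equiv.apply_symm_apply]

lemma gV_kOf (v : ℕ) (h : v ∈ H.V) : gV H (kOf H v h) = v := by
  unfold kOf gV
  rw [Equiv.symm_apply_apply]

/-- the coloring induced by a choice of orientations of the pairs -/
noncomputable def colV (σ : Fin (mm H) → Bool) (v : ℕ) : Bool :=
  if h : v ∈ H.V then
    if h2 : (kOf H v h).val / 2 < mm H then
      if (kOf H v h).val % 2 = 0 then σ ⟨(kOf H v h).val / 2, h2⟩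
      else !σ ⟨(kOf H v h).val / 2, h2⟩
    else true
  else true

lemma colV_a (σ : Fin (mm H) → Bool) (i : Fin (mm H)) : colV H σ (aV H i) = σ i := by
  unfold colV
  rw [dif_pos (aV_mem H i)]
  have hk : kOf H (aV H i) (aV_mem H i) = ⟨2*i.val, by have := two_mm_le H; omega⟩ :=
    kOf_gV H _ _
  rw [hk]
  have h2 : 2*i.val/2 = i.val := by omega
  have hlt : 2*i.val/2 < mm H := by rw [h2]; exact i.isLt
  rw [dif_pos hlt, if_pos (show (2*i.val) % 2 = 0 by omega)]
  congr 1
  exact Fin.ext h2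

lemma colV_b (σ : Fin (mm H) → Bool) (i : Fin (mm H)) : colV H σ (bV H i) = !σ i := by
  unfold colV
  rw [dif_pos (bV_mem H i)]
  have hk : kOf H (bV H i) (bV_mem H i) = ⟨2*i.val+1, by have := two_mm_le H; omega⟩ :=
    kOf_gV H _ _
  rw [hk]
  have h2 : (2*i.val+1)/2 = i.val := by omega
  have hlt : (2*i.val+1)/2 < mm H := by rw [h2]; exact i.isLt
  rw [dif_pos hlt, if_neg (show ¬ (2*i.val+1) % 2 = 0 by omega)]
  congr 2
  exact Fin.ext h2

/-- every paired vertex is an `aV` or a `bV` -/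
lemma rep_or (v : ℕ) (h : v ∈ H.V) (hp : (kOf H v h).val / 2 < mm H) :
    v = aV H ⟨(kOf H v h).val / 2, hp⟩ ∨ v = bV H ⟨(kOf H v h).val / 2, hp⟩ := by
  set k := kOf H v h with hk
  rcases Nat.even_or_odd k.val with he | ho
  · left
    unfold aV
    have : (⟨2*(k.val/2), by have := two_mm_le H; omega⟩ : Fin H.V.card) = k := by
      apply Fin.ext
      simp only
      obtain ⟨t, ht⟩ := he
      omega
    rw [this, hk, gV_kOf]
  · right
    unfold bV
    have : (⟨2*(k.val/2)+1, by have := two_mm_le H; omega⟩ : Fin H.V.card) = k := by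
      apply Fin.ext
      simp only
      obtain ⟨t, ht⟩ := ho
      omega
    rw [this, hk, gV_kOf]

lemma colV_unpaired (σ : Fin (mm H) → Bool) (v : ℕ) (h : v ∈ H.V)
    (h2 : ¬ (kOf H v h).val / 2 < mm H) : colV H σ v = true := by
  unfold colV
  rw [dif_pos h, dif_neg h2]

lemma unpaired_unique (v : ℕ) (h : v ∈ H.V) (h2 : ¬ (kOf H v h).val / 2 < mm H)
    (w : ℕ) (hw : w ∈ H.V) (hw2 : ¬ (kOf H w hw).val / 2 < mm H) : v = w := by
  have h3 := (kOf H v h).isLt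
  have h4 := (kOf H w hw).isLt
  have h5 := le_two_mm H
  have : (kOf H v h).val = (kOf H w hw).val := by omega
  have heq : kOf H v h = kOf H w hw := Fin.ext this
  have := congrArg (gV H) heq
  rwa [gV_kOf, gV_kOf] at this

end HGaux

namespace HGaux2
open HGaux
variable (H : FinHypergraph ℕ)

lemma count_true_ge (σ : Fin (mm H) → Bool) :
    mm H ≤ (H.V.filter fun v => colV H σ v = true).card := by
  classical
  have := Finset.card_le_card_of_injOn (f := fun i : Fin (mm H) => if σ i then aV H i else bV H i)
    (s := Finset.univ) (t := H.V.filter fun v => colV H σ v = true)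
    (by
      intro i _
      by_cases h : σ i
      · simp only [h, if_true]
        exact Finset.mem_filter.mpr ⟨aV_mem H i, by rw [colV_a]; exact h⟩
      · show (if σ i = true then _ else _) ∈ _
        rw [if_neg h]
        refine Finset.mem_filter.mpr ⟨bV_mem H i, by rw [colV_b]; simp [Bool.not_eq_true] at h ⊢; exact h⟩)
    (by
      intro i _ j _ hij
      simp only at hij
      by_cases hi : σ i <;> by_cases hj : σ j <;> simp only [hi, hj, if_true, if_false] at hij
      · exact aV_inj H hij
      · exact absurd hij (aV_ne_bV H i j)
      · exact absurd hij.symm (aV_ne_bV H j i)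
      · exact bV_inj H hij)
  simpa using this

lemma count_false_ge (σ : Fin (mm H) → Bool) :
    mm H ≤ (H.V.filter fun v => colV H σ v = false).card := by
  classical
  have := Finset.card_le_card_of_injOn (f := fun i : Fin (mm H) => if σ i then bV H i else aV H i)
    (s := Finset.univ) (t := H.V.filter fun v => colV H σ v = false)
    (by
      intro i _
      by_cases h : σ i
      · simp only [h, if_true]
        exact Finset.mem_filter.mpr ⟨bV_mem H i, by rw [colV_b]; simp [h]⟩
      · show (if σ i = true then _ else _) ∈ _
        rw [if_neg h]
        refine Finset.mem_filter.mpr ⟨aV_mem H i, by rw [colV_a]; simp [Bool.not_eq_true] at h; exact h⟩)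
    (by
      intro i _ j _ hij
      simp only at hij
      by_cases hi : σ i <;> by_cases hj : σ j <;> simp only [hi, hj, if_true, if_false] at hij
      · exact bV_inj H hij
      · exact absurd hij.symm (aV_ne_bV H j i)
      · exact absurd hij (aV_ne_bV H i j)
      · exact aV_inj H hij)
  simpa using this

lemma count_sum (σ : Fin (mm H) → Bool) :
    (H.V.filter fun v => colV H σ v = true).card
    + (H.V.filter fun v => colV H σ v = false).card = H.V.card := by
  classical
  have := Finset.card_filter_add_card_filter_not
    (s := H.V) (p := fun v => colV H σ v = true)
  rw [← this]
  have heq : (H.V.filter fun a => ¬ colV H σ a = true)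
      = (H.V.filter fun v => colV H σ v = false) := by
    apply Finset.filter_congr
    intro v _
    simp [Bool.not_eq_true]
  rw [heq]

lemma balance (σ : Fin (mm H) → Bool) :
    ((H.V.filter fun v => colV H σ v = true).card : ℤ)
      - ((H.V.filter fun v => colV H σ v = false).card : ℤ) ≤ 1 ∧
    ((H.V.filter fun v => colV H σ v = false).card : ℤ)
      - ((H.V.filter fun v => colV H σ v = true).card : ℤ) ≤ 1 := by
  have h1 := count_true_ge H σ
  have h2 := count_false_ge H σ
  have h3 := count_sum H σ
  have h4 := le_two_mm H
  omega

end HGaux2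

namespace HGaux3
open HGaux
open scoped Classical
variable (H : FinHypergraph ℕ)

/-- the event that `e` is monochromatic -/
noncomputable def Ae (e : Finset ℕ) : Finset (Fin (mm H) → Bool) :=
  univ.filter fun σ => (∀ v ∈ e, colV H σ v = true) ∨ (∀ v ∈ e, colV H σ v = false)

/-- the pairs meeting `e` -/
noncomputable def vble (e : Finset ℕ) : Finset (Fin (mm H)) :=
  univ.filter fun i => aV H i ∈ e ∨ bV H i ∈ e

/-- paired vertices -/
def Pd (v : ℕ) : Prop := ∃ h : v ∈ H.V, (kOf H v h).val / 2 < mm H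

lemma col_agree {e : Finset ℕ} (hsub : e ⊆ H.V) {σ τ : Fin (mm H) → Bool}
    (hagree : ∀ j ∈ vble H e, σ j = τ j) : ∀ v ∈ e, colV H σ v = colV H τ v := by
  intro v hv
  have h : v ∈ H.V := hsub hv
  by_cases hp : (kOf H v h).val / 2 < mm H
  · set i : Fin (mm H) := ⟨(kOf H v h).val / 2, hp⟩ with hi
    rcases rep_or H v h hp with hrep | hrep
    · have hiv : i ∈ vble H e := by
        refine Finset.mem_filter.mpr ⟨Finset.mem_univ _, Or.inl ?_⟩
        rw [← hrep]; exact hv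
      rw [hrep, colV_a, colV_a, hagree i hiv]
    · have hiv : i ∈ vble H e := by
        refine Finset.mem_filter.mpr ⟨Finset.mem_univ _, Or.inr ?_⟩
        rw [← hrep]; exact hv
      rw [hrep, colV_b, colV_b, hagree i hiv]
  · rw [colV_unpaired H σ v h hp, colV_unpaired H τ v h hp]

lemma vble_card_le {e : Finset ℕ} : (vble H e).card ≤ e.card := by
  apply Finset.card_le_card_of_injOn (f := fun i => if aV H i ∈ e then aV H i else bV H i)
  · intro i hi
    have := (Finset.mem_filter.mp hi).2
    by_cases h : aV H i ∈ e
    · dsimp only; rw [if_pos h]; exact h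
    · dsimp only; rw [if_neg h, Finset.mem_coe]; tauto
  · intro i hi j hj hij
    simp only at hij
    by_cases h1 : aV H i ∈ e <;> by_cases h2 : aV H j ∈ e
    · rw [if_pos h1, if_pos h2] at hij; exact aV_inj H hij
    · rw [if_pos h1, if_neg h2] at hij; exact absurd hij (aV_ne_bV H i j)
    · rw [if_neg h1, if_pos h2] at hij; exact absurd hij.symm (aV_ne_bV H j i)
    · rw [if_neg h1, if_neg h2] at hij; exact bV_inj H hij

lemma paired_count {e : Finset ℕ} (hsub : e ⊆ H.V) :
    e.card ≤ (e.filter (Pd H)).card + 1 := by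
  have hle : (e.filter fun v => ¬ Pd H v).card ≤ 1 := by
    apply Finset.card_le_one.mpr
    intro v hv w hw
    have hv1 := (Finset.mem_filter.mp hv)
    have hw1 := (Finset.mem_filter.mp hw)
    have hvV : v ∈ H.V := hsub hv1.1
    have hwV : w ∈ H.V := hsub hw1.1
    have hv2 : ¬ (kOf H v hvV).val / 2 < mm H := fun hc => hv1.2 ⟨hvV, hc⟩
    have hw2 : ¬ (kOf H w hwV).val / 2 < mm H := fun hc => hw1.2 ⟨hwV, hc⟩
    exact unpaired_unique H v hvV hv2 w hwV hw2
  have := Finset.card_filter_add_card_filter_not (s := e) (p := Pd H)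
  omega

end HGaux3

namespace HGaux4
open HGaux HGaux3
open scoped Classical
variable (H : FinHypergraph ℕ)

open LLLcore in

lemma Ae_det {e : Finset ℕ} (hsub : e ⊆ H.V) : LLLcore.Det (vble H e) (Ae H e) := by
  intro σ τ hagree hσ
  have hcol := col_agree H hsub hagree
  simp only [Ae, Finset.mem_filter, Finset.mem_univ, true_and] at hσ ⊢
  rcases hσ with h | h
  · exact Or.inl (fun v hv => by rw [← hcol v hv]; exact h v hv)
  · exact Or.inr (fun v hv => by rw [← hcol v hv]; exact h v hv)

/-- under "no pair fully inside e", paired vertices of `e` inject into `vble e` -/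
lemma paired_le_vble {e : Finset ℕ} (hsub : e ⊆ H.V)
    (hc2 : ¬ ∃ i, aV H i ∈ e ∧ bV H i ∈ e) :
    (e.filter (Pd H)).card ≤ (vble H e).card := by
  push_neg at hc2
  rcases (e.filter (Pd H)).eq_empty_or_nonempty with hemp | hne
  · simp [hemp]
  have hmap : ∀ v ∈ e.filter (Pd H), ∃ i ∈ vble H e, (aV H i = v ∨ bV H i = v) := by
    intro v hv
    have hmem := Finset.mem_filter.mp hv
    have hve : v ∈ e := hmem.1
    obtain ⟨h, hp⟩ := hmem.2
    refine ⟨⟨(kOf H v h).val / 2, hp⟩, ?_⟩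
    rcases rep_or H v h hp with hrep | hrep
    · exact ⟨Finset.mem_filter.mpr ⟨Finset.mem_univ _, Or.inl (hrep ▸ hve)⟩, Or.inl hrep.symm⟩
    · exact ⟨Finset.mem_filter.mpr ⟨Finset.mem_univ _, Or.inr (hrep ▸ hve)⟩, Or.inr hrep.symm⟩
  have hmm : 0 < mm H := by
    obtain ⟨v, hv⟩ := hne
    obtain ⟨_, hp⟩ := (Finset.mem_filter.mp hv).2
    omega
  choose idx hidx1 hidx2 using hmap
  apply Finset.card_le_card_of_injOn
    (f := fun v => if h : v ∈ e.filter (Pd H) then idx v h else ⟨0, hmm⟩)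
  · intro v hv
    rw [Finset.mem_coe] at hv; dsimp only
    rw [dif_pos hv]
    exact hidx1 v hv
  · intro v hv w hw hvw
    simp only [Finset.mem_coe] at hv hw
    have hvw : (if h : v ∈ e.filter (Pd H) then idx v h else ⟨0, hmm⟩)
        = (if h : w ∈ e.filter (Pd H) then idx w h else ⟨0, hmm⟩) := hvw
    rw [dif_pos hv, dif_pos hw] at hvw
    by_contra hne2
    have h1 := hidx2 v hv
    have h2 := hidx2 w hw
    rw [hvw] at h1
    have hve : v ∈ e := (Finset.mem_filter.mp hv).1
    have hwe : w ∈ e := (Finset.mem_filter.mp hw).1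
    set i := idx w hw
    rcases h1 with h1 | h1 <;> rcases h2 with h2 | h2
    · exact hne2 (h1 ▸ h2)
    · exact hc2 i (by rw [h1]; exact hve) (by rw [h2]; exact hwe)
    · exact hc2 i (by rw [h2]; exact hwe) (by rw [h1]; exact hve)
    · exact hne2 (h1 ▸ h2)

end HGaux4

namespace HGaux5
open HGaux HGaux3 HGaux4
open scoped Classical
variable (H : FinHypergraph ℕ)


lemma Ae_card {e : Finset ℕ} (hsub : e ⊆ H.V) :
    (Ae H e).card * 2 ^ e.card ≤ 2 ^ (mm H + 1) := by
  by_cases hc1 : ∃ i, aV H i ∈ e ∧ bV H i ∈ e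
  · have hempty : Ae H e = ∅ := by
      rw [Finset.eq_empty_iff_forall_notMem]
      intro σ hσ
      obtain ⟨i, ha, hb⟩ := hc1
      rcases (Finset.mem_filter.mp hσ).2 with h | h
      · have h1 := h _ ha
        have h2 := h _ hb
        rw [colV_a] at h1
        rw [colV_b, h1] at h2
        simp at h2
      · have h1 := h _ ha
        have h2 := h _ hb
        rw [colV_a] at h1
        rw [colV_b, h1] at h2
        simp at h2
    simp [hempty]
  · set pol : Fin (mm H) → Bool := fun i => if aV H i ∈ e then true else false with hpol
    set At := (univ : Finset (Fin (mm H) → Bool)).filter fun σ => ∀ v ∈ e, colV H σ v = true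
      with hAt
    set Af := (univ : Finset (Fin (mm H) → Bool)).filter fun σ => ∀ v ∈ e, colV H σ v = false
      with hAf
    set Pin := (univ : Finset (Fin (mm H) → Bool)).filter fun σ => ∀ i ∈ vble H e, σ i = pol i
      with hPin
    set Pin' := (univ : Finset (Fin (mm H) → Bool)).filter
      fun σ => ∀ i ∈ vble H e, σ i = !pol i with hPin'
    have hcase2 := hc1
    push_neg at hcase2
    have hsplit : Ae H e = At ∪ Af := by
      rw [hAt, hAf, Ae, ← Finset.filter_or]
    have hAtPin : At ⊆ Pin := by
      intro σ hσ
      have h := (Finset.mem_filter.mp hσ).2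
      refine Finset.mem_filter.mpr ⟨Finset.mem_univ _, ?_⟩
      intro i hi
      rcases (Finset.mem_filter.mp hi).2 with ha | hb
      · have := h _ ha
        rw [colV_a] at this
        rw [this, hpol]
        simp [ha]
      · have hane : aV H i ∉ e := fun hc => hc1 ⟨i, hc, hb⟩
        have := h _ hb
        rw [colV_b] at this
        simp only [Bool.not_eq_true'] at this
        rw [this, hpol]
        simp [hane]
    have hAfPin : Af ⊆ Pin' := by
      intro σ hσ
      have h := (Finset.mem_filter.mp hσ).2
      refine Finset.mem_filter.mpr ⟨Finset.mem_univ _, ?_⟩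
      intro i hi
      rcases (Finset.mem_filter.mp hi).2 with ha | hb
      · have := h _ ha
        rw [colV_a] at this
        rw [this, hpol]
        simp [ha]
      · have hane : aV H i ∉ e := fun hc => hc1 ⟨i, hc, hb⟩
        have := h _ hb
        rw [colV_b] at this
        simp only [Bool.not_eq_false'] at this
        rw [this, hpol]
        simp [hane]
    have hPinC : Pin.card * 2 ^ (vble H e).card = 2 ^ (mm H) := LLLcore.pinned_card _ pol
    have hPinC' : Pin'.card * 2 ^ (vble H e).card = 2 ^ (mm H) := LLLcore.pinned_card _ _
    have hfcard := paired_le_vble H hsub hc1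
    have hpc := paired_count H hsub
    by_cases hL : ∃ v ∈ e, ¬ Pd H v
    · have hAfe : Af = ∅ := by
        rw [Finset.eq_empty_iff_forall_notMem]
        intro σ hσ
        obtain ⟨v, hv, hnp⟩ := hL
        have h := (Finset.mem_filter.mp hσ).2 v hv
        have hvV : v ∈ H.V := hsub hv
        have hp2 : ¬ (kOf H v hvV).val / 2 < mm H := fun hc => hnp ⟨hvV, hc⟩
        rw [colV_unpaired H σ v hvV hp2] at h
        simp at h
      have h1 : (Ae H e).card ≤ Pin.card := by
        rw [hsplit, hAfe, Finset.union_empty]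
        exact Finset.card_le_card hAtPin
      have h2 : e.card ≤ (vble H e).card + 1 := by omega
      calc (Ae H e).card * 2 ^ e.card
          ≤ Pin.card * 2 ^ ((vble H e).card + 1) :=
            Nat.mul_le_mul h1 (Nat.pow_le_pow_right (by norm_num) h2)
        _ = Pin.card * 2 ^ (vble H e).card * 2 := by ring
        _ = 2 ^ (mm H + 1) := by rw [hPinC]; ring
    · push_neg at hL
      have hall : e.filter (Pd H) = e := Finset.filter_eq_self.mpr hL
      have h3 : (e.filter (Pd H)).card = e.card := by rw [hall]
      have h2 : e.card ≤ (vble H e).card := by omega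
      have h1 : (Ae H e).card ≤ Pin.card + Pin'.card := by
        calc (Ae H e).card ≤ At.card + Af.card := by
              rw [hsplit]; exact Finset.card_union_le _ _
          _ ≤ Pin.card + Pin'.card :=
              Nat.add_le_add (Finset.card_le_card hAtPin) (Finset.card_le_card hAfPin)
      calc (Ae H e).card * 2 ^ e.card
          ≤ (Pin.card + Pin'.card) * 2 ^ (vble H e).card :=
            Nat.mul_le_mul h1 (Nat.pow_le_pow_right (by norm_num) h2)
        _ = Pin.card * 2 ^ (vble H e).card + Pin'.card * 2 ^ (vble H e).card := by ring
        _ = 2 ^ (mm H + 1) := by rw [hPinC, hPinC']; ring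

end HGaux5

namespace HGaux6
open HGaux HGaux3 HGaux4
open scoped Classical
variable (H : FinHypergraph ℕ)

noncomputable def We (e : Finset ℕ) : Finset ℕ :=
  (vble H e).biUnion (fun i => ({aV H i, bV H i} : Finset ℕ))

lemma We_card (e : Finset ℕ) : (We H e).card ≤ 2 * e.card := by
  calc (We H e).card ≤ ∑ i ∈ vble H e, ({aV H i, bV H i} : Finset ℕ).card :=
        Finset.card_biUnion_le
    _ ≤ ∑ _i ∈ vble H e, 2 := Finset.sum_le_sum (fun i _ => Finset.card_insert_le _ _)
    _ = 2 * (vble H e).card := by rw [Finset.sum_const]; ring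
    _ ≤ 2 * e.card := by have := vble_card_le H (e := e); omega

lemma nbr_bound {n : ℕ} (hU : H.IsUniform n) {e : Finset ℕ} (he : e ∈ H.E) :
    (H.E.filter fun f => f ≠ e ∧ (vble H f ∩ vble H e).Nonempty).card + (n - 1)
      ≤ ∑ w ∈ We H e, H.degree w := by
  have hsub : e ⊆ H.V := hU.1 e he
  have hcard : e.card = n := hU.2 e he
  have step1 : (H.E.filter fun f => f ≠ e ∧ (vble H f ∩ vble H e).Nonempty)
      ⊆ (We H e).biUnion (fun w => (H.E.erase e).filter (fun f => w ∈ f)) := by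
    intro f hf
    obtain ⟨hfE, hfne, i, hi⟩ : f ∈ H.E ∧ f ≠ e ∧ ∃ i, i ∈ vble H f ∩ vble H e := by
      have h := Finset.mem_filter.mp hf
      exact ⟨h.1, h.2.1, h.2.2⟩
    have hif : i ∈ vble H f := (Finset.mem_inter.mp hi).1
    have hie : i ∈ vble H e := (Finset.mem_inter.mp hi).2
    rcases (Finset.mem_filter.mp hif).2 with ha | hb
    · refine Finset.mem_biUnion.mpr ⟨aV H i, ?_, ?_⟩
      · exact Finset.mem_biUnion.mpr ⟨i, hie, by simp⟩
      · exact Finset.mem_filter.mpr ⟨Finset.mem_erase.mpr ⟨hfne, hfE⟩, ha⟩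
    · refine Finset.mem_biUnion.mpr ⟨bV H i, ?_, ?_⟩
      · exact Finset.mem_biUnion.mpr ⟨i, hie, by simp⟩
      · exact Finset.mem_filter.mpr ⟨Finset.mem_erase.mpr ⟨hfne, hfE⟩, hb⟩
  have step2 : (H.E.filter fun f => f ≠ e ∧ (vble H f ∩ vble H e).Nonempty).card
      ≤ ∑ w ∈ We H e, ((H.E.erase e).filter (fun f => w ∈ f)).card :=
    le_trans (Finset.card_le_card step1) Finset.card_biUnion_le
  have step3 : ∀ w ∈ We H e,
      ((H.E.erase e).filter (fun f => w ∈ f)).card + (if w ∈ e then 1 else 0)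
        ≤ H.degree w := by
    intro w _
    unfold FinHypergraph.degree
    rw [Finset.filter_erase]
    by_cases hwe : w ∈ e
    · rw [if_pos hwe]
      have hmem : e ∈ H.E.filter (fun f => w ∈ f) := Finset.mem_filter.mpr ⟨he, hwe⟩
      have hpos : 1 ≤ (H.E.filter (fun f => w ∈ f)).card :=
        Finset.card_pos.mpr ⟨e, hmem⟩
      rw [Finset.card_erase_of_mem hmem]
      omega
    · rw [if_neg hwe]
      have := Finset.card_le_card (Finset.erase_subset e (H.E.filter (fun f => w ∈ f)))
      omega
  have step4 : ∑ w ∈ We H e, (if w ∈ e then 1 else 0) = ((We H e).filter (fun w => w ∈ e)).card := by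
    rw [Finset.card_filter]
  have step5 : e.filter (Pd H) ⊆ (We H e).filter (fun w => w ∈ e) := by
    intro v hv
    have hve : v ∈ e := (Finset.mem_filter.mp hv).1
    obtain ⟨h, hp⟩ := (Finset.mem_filter.mp hv).2
    refine Finset.mem_filter.mpr ⟨?_, hve⟩
    have hiv : (⟨(kOf H v h).val / 2, hp⟩ : Fin (mm H)) ∈ vble H e := by
      rcases rep_or H v h hp with hrep | hrep
      · exact Finset.mem_filter.mpr ⟨Finset.mem_univ _, Or.inl (hrep ▸ hve)⟩
      · exact Finset.mem_filter.mpr ⟨Finset.mem_univ _, Or.inr (hrep ▸ hve)⟩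
    refine Finset.mem_biUnion.mpr ⟨_, hiv, ?_⟩
    rcases rep_or H v h hp with hrep | hrep
    · exact Finset.mem_insert.mpr (Or.inl hrep)
    · exact Finset.mem_insert.mpr (Or.inr (Finset.mem_singleton.mpr hrep))
  have step6 : n - 1 ≤ ((We H e).filter (fun w => w ∈ e)).card := by
    have h1 := paired_count H hsub
    have h2 := Finset.card_le_card step5
    omega
  have step7 : ∑ w ∈ We H e, (((H.E.erase e).filter (fun f => w ∈ f)).card
      + (if w ∈ e then 1 else 0)) ≤ ∑ w ∈ We H e, H.degree w :=
    Finset.sum_le_sum step3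
  rw [Finset.sum_add_distrib, step4] at step7
  omega

end HGaux6


lemma ratio_ge (D : ℕ) : (1:ℝ)/Real.exp 1 ≤ (((D:ℝ)+1)/((D:ℝ)+2))^D := by
  have hD1 : (0:ℝ) < (D:ℝ)+1 := by positivity
  have hD2 : (0:ℝ) < (D:ℝ)+2 := by positivity
  have h := Real.add_one_le_exp (1/((D:ℝ)+1))
  have hbase : ((D:ℝ)+2)/((D:ℝ)+1) = 1/((D:ℝ)+1) + 1 := by field_simp; ring
  have hbase1 : (1:ℝ) ≤ ((D:ℝ)+2)/((D:ℝ)+1) := by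
    rw [le_div_iff₀ hD1]; linarith
  have hpow : (((D:ℝ)+2)/((D:ℝ)+1))^(D+1) ≤ Real.exp 1 := by
    calc (((D:ℝ)+2)/((D:ℝ)+1))^(D+1) = (1/((D:ℝ)+1) + 1)^(D+1) := by rw [hbase]
      _ ≤ (Real.exp (1/((D:ℝ)+1)))^(D+1) := by
          apply pow_le_pow_left₀ (by positivity) h
      _ = Real.exp (((D:ℕ)+1 : ℕ) * (1/((D:ℝ)+1))) := (Real.exp_nat_mul _ _).symm
      _ = Real.exp 1 := by
          congr 1
          push_cast
          field_simp
  have hpow2 : (((D:ℝ)+2)/((D:ℝ)+1))^D ≤ Real.exp 1 :=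
    le_trans (pow_le_pow_right₀ hbase1 (Nat.le_succ D)) hpow
  have hinv : (((D:ℝ)+1)/((D:ℝ)+2))^D = ((((D:ℝ)+2)/((D:ℝ)+1))^D)⁻¹ := by
    rw [← inv_pow]
    congr 1
    rw [inv_div]
  rw [hinv, one_div]
  exact inv_anti₀ (by positivity) hpow2


lemma subtype_filter_card {γ : Type*} [DecidableEq γ] (s : Finset γ) (p : γ → Prop)
    [DecidablePred p] :
    ((univ : Finset ↥s).filter fun x => p x.1).card = (s.filter p).card := by
  refine Finset.card_nbij (fun (x : ↥s) => (x : γ)) ?_ ?_ ?_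
  · intro a ha
    exact Finset.mem_filter.mpr ⟨a.2, (Finset.mem_filter.mp ha).2⟩
  · intro a _ b _ hab
    exact Subtype.ext hab
  · intro b hb
    simp only [Finset.coe_filter, Set.mem_setOf_eq] at hb
    exact ⟨⟨b, hb.1⟩, by simp [hb.2], rfl⟩


/-- Every `n`-uniform hypergraph with maximum degree at most `2^(n-2)/(e·n)` has a proper
halving 2-coloring: no hyperedge is monochromatic and the two color classes have sizes
differing by at most `1`. -/
theorem proper_halving_two_coloring (n : ℕ) (hn : 1 ≤ n) (H : FinHypergraph ℕ)
    (hU : H.IsUniform n)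
    (hdeg : ∀ v : ℕ, (H.degree v : ℝ) ≤ 2 ^ (n - 2) / (Real.exp 1 * n)) :
    ∃ c : ℕ → Bool,
      (∀ e ∈ H.E, (∃ v ∈ e, c v = true) ∧ (∃ v ∈ e, c v = false)) ∧
      ((H.V.filter fun v => c v = true).card : ℤ) -
          ((H.V.filter fun v => c v = false).card : ℤ) ≤ 1 ∧
      ((H.V.filter fun v => c v = false).card : ℤ) -
          ((H.V.filter fun v => c v = true).card : ℤ) ≤ 1 := by
  classical
  obtain ⟨σ, hσ⟩ : ∃ σ : Fin (HGaux.mm H) → Bool, ∀ e ∈ H.E,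
      (∃ v ∈ e, HGaux.colV H σ v = true) ∧ (∃ v ∈ e, HGaux.colV H σ v = false) := by
    rcases Finset.eq_empty_or_nonempty H.E with hE | ⟨e₀, he₀⟩
    · exact ⟨fun _ => false, by simp [hE]⟩
    · have hsub : ∀ e ∈ H.E, e ⊆ H.V := hU.1
      have hcard : ∀ e ∈ H.E, e.card = n := hU.2
      have hexp2 : (2:ℝ) ≤ Real.exp 1 := by
        have := Real.add_one_le_exp 1; linarith
      have hexp_pos : (0:ℝ) < Real.exp 1 := Real.exp_pos 1
      have hnR : (1:ℝ) ≤ (n:ℝ) := by exact_mod_cast hn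
      -- the existence of an edge forces n ≥ 3
      have hn3 : 3 ≤ n := by
        by_contra hlt
        push_neg at hlt
        obtain ⟨v, hv⟩ := Finset.card_pos.mp
          (show 0 < e₀.card by rw [hcard e₀ he₀]; omega)
        have hd1 : 1 ≤ H.degree v :=
          Finset.card_pos.mpr ⟨e₀, Finset.mem_filter.mpr ⟨he₀, hv⟩⟩
        have hdv := hdeg v
        have h22 : n - 2 = 0 := by omega
        rw [h22, pow_zero] at hdv
        have hge : (1:ℝ) ≤ 1/(Real.exp 1 * n) := le_trans (by exact_mod_cast hd1) hdv
        rw [le_div_iff₀ (by positivity)] at hge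
        nlinarith
      have hn3R : (3:ℝ) ≤ (n:ℝ) := by exact_mod_cast hn3
      -- dependency degree
      set D : ℕ := Finset.univ.sup (fun i : {x // x ∈ H.E} =>
        ((Finset.univ : Finset {x // x ∈ H.E}).filter
          (fun j => j ≠ i ∧ (HGaux3.vble H j.1 ∩ HGaux3.vble H i.1).Nonempty)).card) with hDdef
      have hDle : ∀ i : {x // x ∈ H.E},
          ((Finset.univ : Finset {x // x ∈ H.E}).filter
            (fun j => j ≠ i ∧ (HGaux3.vble H j.1 ∩ HGaux3.vble H i.1).Nonempty)).card ≤ D := by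
        intro i
        rw [hDdef]
        exact Finset.le_sup (f := fun i : {x // x ∈ H.E} =>
          ((Finset.univ : Finset {x // x ∈ H.E}).filter
            (fun j => j ≠ i ∧ (HGaux3.vble H j.1 ∩ HGaux3.vble H i.1).Nonempty)).card)
          (Finset.mem_univ i)
      -- real bound on D
      have hDreal : (D:ℝ) + ((n:ℝ) - 1) ≤ 2 * 2^(n-2) / Real.exp 1 := by
        obtain ⟨i0, -, hsup⟩ := Finset.exists_mem_eq_sup
          (Finset.univ : Finset {x // x ∈ H.E}) ⟨⟨e₀, he₀⟩, Finset.mem_univ _⟩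
          (fun i : {x // x ∈ H.E} =>
            ((Finset.univ : Finset {x // x ∈ H.E}).filter
              (fun j => j ≠ i ∧ (HGaux3.vble H j.1 ∩ HGaux3.vble H i.1).Nonempty)).card)
        have hconv : ((Finset.univ : Finset {x // x ∈ H.E}).filter
              (fun j => j ≠ i0 ∧ (HGaux3.vble H j.1 ∩ HGaux3.vble H i0.1).Nonempty)).card
            = (H.E.filter fun f => f ≠ i0.1 ∧ (HGaux3.vble H f ∩ HGaux3.vble H i0.1).Nonempty).card := by
          rw [← subtype_filter_card H.E
            (fun f => f ≠ i0.1 ∧ (HGaux3.vble H f ∩ HGaux3.vble H i0.1).Nonempty)]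
          congr 1
          apply Finset.filter_congr
          intro j _
          exact and_congr_left' (not_congr Subtype.ext_iff)
        have hnb := HGaux6.nbr_bound H hU i0.2
        have hWc : ((HGaux6.We H i0.1).card : ℝ) ≤ 2*(n:ℝ) := by
          have := HGaux6.We_card H i0.1
          rw [hcard i0.1 i0.2] at this
          exact_mod_cast this
        have hsum : (∑ w ∈ HGaux6.We H i0.1, (H.degree w : ℝ))
            ≤ ((HGaux6.We H i0.1).card : ℝ) * (2^(n-2)/(Real.exp 1 * n)) := by
          calc (∑ w ∈ HGaux6.We H i0.1, (H.degree w : ℝ))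
              ≤ ∑ _w ∈ HGaux6.We H i0.1, (2^(n-2)/(Real.exp 1 * n)) :=
                Finset.sum_le_sum (fun w _ => hdeg w)
            _ = ((HGaux6.We H i0.1).card : ℝ) * (2^(n-2)/(Real.exp 1 * n)) := by
                rw [Finset.sum_const, nsmul_eq_mul]
        have hcast : (D:ℝ) + ((n:ℝ) - 1) ≤ ∑ w ∈ HGaux6.We H i0.1, (H.degree w : ℝ) := by
          have h1 : ((n:ℝ) - 1) = ((n - 1 : ℕ) : ℝ) := by
            rw [Nat.cast_sub hn]; norm_num
          rw [hDdef, hsup, hconv, h1]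
          have := hnb
          push_cast
          exact_mod_cast this
        have hdm : (0:ℝ) ≤ 2^(n-2)/(Real.exp 1 * n) := by positivity
        calc (D:ℝ) + ((n:ℝ) - 1) ≤ ((HGaux6.We H i0.1).card : ℝ) * (2^(n-2)/(Real.exp 1 * n)) :=
              le_trans hcast hsum
          _ ≤ 2*(n:ℝ) * (2^(n-2)/(Real.exp 1 * n)) := by
              apply mul_le_mul_of_nonneg_right hWc hdm
          _ = 2 * 2^(n-2) / Real.exp 1 := by
              field_simp
      -- key numeric bound
      have hpow4 : ((2:ℝ)^(n-2)) * 4 = 2^n := by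
        have h : n - 2 + 2 = n := by omega
        rw [← h, pow_add]
        norm_num
      have hkey : Real.exp 1 * ((D:ℝ)+2) * 2 ≤ 2^n := by
        have h1 : Real.exp 1 * ((D:ℝ) + ((n:ℝ) - 1)) ≤ 2 * 2^(n-2) := by
          calc Real.exp 1 * ((D:ℝ) + ((n:ℝ) - 1))
              ≤ Real.exp 1 * (2 * 2^(n-2) / Real.exp 1) :=
                mul_le_mul_of_nonneg_left hDreal hexp_pos.le
            _ = 2 * 2^(n-2) := by field_simp
        nlinarith [hexp_pos, hn3R, Nat.cast_nonneg (α := ℝ) D]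
      set x : ℝ := 1/((D:ℝ)+2) with hxdef
      have hD2 : (0:ℝ) < (D:ℝ)+2 := by positivity
      have hx0 : 0 < x := by rw [hxdef]; positivity
      have hx1 : x < 1 := by
        rw [hxdef, div_lt_one hD2]
        have : (0:ℝ) ≤ (D:ℝ) := Nat.cast_nonneg D
        linarith
      have h1x : 1 - x = ((D:ℝ)+1)/((D:ℝ)+2) := by
        rw [hxdef]
        field_simp
        ring
      have hxlow : 2/(2:ℝ)^n ≤ x * (1-x)^D := by
        have hr := ratio_ge D
        have h2 : x * ((1:ℝ)/Real.exp 1) ≤ x * (1-x)^D := by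
          rw [h1x]
          exact mul_le_mul_of_nonneg_left hr hx0.le
        have h3 : 2/(2:ℝ)^n ≤ x * (1/Real.exp 1) := by
          have hxe : x * (1/Real.exp 1) = 1/(((D:ℝ)+2) * Real.exp 1) := by
            rw [hxdef]; field_simp
          rw [hxe, div_le_div_iff₀ (by positivity) (by positivity)]
          nlinarith [hkey]
        linarith
      have hp : ∀ i : {x // x ∈ H.E},
          (((HGaux3.Ae H i.1).card : ℝ)) ≤ x * (1-x)^D * 2^(HGaux.mm H) := by
        intro i
        have hnat := HGaux5.Ae_card H (hsub i.1 i.2)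
        rw [hcard i.1 i.2] at hnat
        have hcastb : ((HGaux3.Ae H i.1).card : ℝ) * 2^n ≤ 2^(HGaux.mm H) * 2 := by
          calc ((HGaux3.Ae H i.1).card : ℝ) * 2^n
              = (((HGaux3.Ae H i.1).card * 2^n : ℕ) : ℝ) := by push_cast; ring
            _ ≤ ((2^(HGaux.mm H + 1) : ℕ) : ℝ) := by exact_mod_cast hnat
            _ = 2^(HGaux.mm H) * 2 := by push_cast [pow_succ]; ring
        have hmm_pos : (0:ℝ) < 2^(HGaux.mm H) := by positivity
        have hppos : (0:ℝ) < (2:ℝ)^n := by positivity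
        calc ((HGaux3.Ae H i.1).card : ℝ)
            = ((HGaux3.Ae H i.1).card : ℝ) * 2^n / 2^n := by field_simp
          _ ≤ 2^(HGaux.mm H) * 2 / 2^n := by gcongr
          _ = (2/(2:ℝ)^n) * 2^(HGaux.mm H) := by ring
          _ ≤ (x * (1-x)^D) * 2^(HGaux.mm H) :=
              mul_le_mul_of_nonneg_right hxlow hmm_pos.le
      obtain ⟨σ, hσ2⟩ := LLLcore.lll (A := fun i : {x // x ∈ H.E} => HGaux3.Ae H i.1)
        (vbl := fun i => HGaux3.vble H i.1)
        (fun i => HGaux4.Ae_det H (hsub i.1 i.2)) x hx0 hx1 D hDle hp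
      refine ⟨σ, fun e he => ?_⟩
      have hne := hσ2 ⟨e, he⟩
      simp only [HGaux3.Ae, Finset.mem_filter, Finset.mem_univ, true_and, not_or,
        not_forall] at hne
      obtain ⟨h1, h2⟩ := hne
      obtain ⟨v1, hv1, hb1⟩ := h1
      obtain ⟨v2, hv2, hb2⟩ := h2
      exact ⟨⟨v2, hv2, by simpa using hb2⟩, ⟨v1, hv1, by simpa using hb1⟩⟩
  exact ⟨HGaux.colV H σ, hσ, (HGaux2.balance H σ).1, (HGaux2.balance H σ).2⟩
end

section
/- For every positive integer k, every balanced (k, s)-CNF formula with s = ⌊2^(k+1)/(e·k)⌋ is satisfiable, where e denotes Euler's number (e = exp 1); that is, every CNF formula in which every clause contains exactly k literals and every literal occurs in at most ⌊2^(k+1)/(e·k)⌋/2 clauses is satisfiable. In other words, f_bal(k) ≥ ⌊2^(k+1)/(e·k)⌋, where f_bal(k) is the largest s such that every balanced (k,s)-CNF formula is satisfiable. -/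
open Finset

namespace BalLLL

theorem pow_ge_exp_neg_one (d : ℕ) (hd : 2 ≤ d) (c : ℕ) (hc : (c:ℝ) ≤ (d:ℝ) - 1) :
    (Real.exp 1)⁻¹ ≤ (1 - (d:ℝ)⁻¹) ^ c := by
  have hd1 : (1:ℝ) ≤ (d:ℝ) - 1 := by
    have : (2:ℝ) ≤ d := by exact_mod_cast hd
    linarith
  have hd1p : (0:ℝ) < (d:ℝ) - 1 := by linarith
  have hdp : (0:ℝ) < (d:ℝ) := by linarith
  set t := ((d:ℝ) - 1)⁻¹ with ht
  have htp : 0 < t := inv_pos.2 hd1p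
  have h1 : t + 1 ≤ Real.exp t := Real.add_one_le_exp t
  have h1tp : (0:ℝ) < 1 + t := by linarith
  have h2 : Real.exp (-t) ≤ 1 - (d:ℝ)⁻¹ := by
    rw [Real.exp_neg]
    have hinv : (1 + t)⁻¹ = 1 - (d:ℝ)⁻¹ := by
      rw [ht]
      field_simp
      ring
    rw [← hinv]
    apply inv_anti₀ h1tp
    linarith
  have hct : (c:ℝ) * t ≤ 1 := by
    have := mul_le_mul_of_nonneg_right hc (le_of_lt htp)
    rw [ht] at this ⊢
    rw [mul_inv_cancel₀ (ne_of_gt hd1p)] at this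
    exact this
  calc (Real.exp 1)⁻¹ = Real.exp (-1) := (Real.exp_neg 1).symm
    _ ≤ Real.exp ((c:ℝ) * (-t)) := by
        apply Real.exp_le_exp.2
        nlinarith
    _ = (Real.exp (-t)) ^ c := by rw [← Real.exp_nat_mul]
    _ ≤ (1 - (d:ℝ)⁻¹) ^ c := pow_le_pow_left₀ (le_of_lt (Real.exp_pos _)) h2 c



attribute [local instance] Classical.propDecidable

def SatC (A : Finset ℕ) (C : Clause) : Prop := ∃ l ∈ C, (l.1 ∈ A ↔ l.2 = true)

def Confl (C D : Clause) : Prop := ∃ l ∈ C, (l.1, !l.2) ∈ D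

noncomputable def W (V : Finset ℕ) (S : Finset Clause) : ℕ :=
  (V.powerset.filter fun A => ∀ C ∈ S, SatC A C).card

noncomputable def Bad (V : Finset ℕ) (S : Finset Clause) (C : Clause) : ℕ :=
  (V.powerset.filter fun A => (∀ D ∈ S, SatC A D) ∧ ¬ SatC A C).card

theorem confl_symm {C D : Clause} (h : Confl C D) : Confl D C := by
  obtain ⟨l, hl, hl'⟩ := h
  refine ⟨(l.1, !l.2), hl', ?_⟩
  simpa using hl

theorem sat_of_confl {C D : Clause} {A : Finset ℕ} (h : Confl C D) (hA : ¬ SatC A C) :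
    SatC A D := by
  obtain ⟨l, hlC, hD⟩ := h
  have hl : ¬ (l.1 ∈ A ↔ l.2 = true) := fun hiff => hA ⟨l, hlC, hiff⟩
  refine ⟨(l.1, !l.2), hD, ?_⟩
  cases hb : l.2 <;> rw [hb] at hl <;> simp_all

theorem W_insert (V : Finset ℕ) (S : Finset Clause) (C : Clause) :
    W V (insert C S) + Bad V S C = W V S := by
  classical
  have h1 : (V.powerset.filter fun A => ∀ D ∈ insert C S, SatC A D)
      = (V.powerset.filter fun A => ∀ D ∈ S, SatC A D).filter fun A => SatC A C := by
    rw [Finset.filter_filter]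
    apply Finset.filter_congr
    intro A _
    simp only [Finset.forall_mem_insert]
    tauto
  have h2 : (V.powerset.filter fun A => (∀ D ∈ S, SatC A D) ∧ ¬ SatC A C)
      = (V.powerset.filter fun A => ∀ D ∈ S, SatC A D).filter fun A => ¬ SatC A C := by
    rw [Finset.filter_filter]
  rw [W, Bad, W, h1, h2, Finset.card_filter_add_card_filter_not]

theorem bad_eq_bad_filter (V : Finset ℕ) (S : Finset Clause) (C : Clause) :
    Bad V S C = Bad V (S.filter fun D => ¬ Confl C D) C := by
  classical
  unfold Bad
  congr 1
  apply Finset.filter_congr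
  intro A _
  constructor
  · rintro ⟨hall, hnc⟩
    exact ⟨fun D hD => hall D (Finset.mem_filter.1 hD).1, hnc⟩
  · rintro ⟨hall, hnc⟩
    refine ⟨fun D hD => ?_, hnc⟩
    by_cases hc : Confl C D
    · exact sat_of_confl hc hnc
    · exact hall D (Finset.mem_filter.2 ⟨hD, hc⟩)



theorem num_bound (V : Finset ℕ) (C : Clause) (k : ℕ)
    (hdv : ∀ l ∈ C, ∀ l' ∈ C, l.1 = l'.1 → l = l')
    (hcard : C.card = k) (hsub : C.image Prod.fst ⊆ V)
    (S : Finset Clause) (hS : ∀ D ∈ S, ¬ Confl C D) :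
    2 ^ k * Bad V S C ≤ W V S := by
  classical
  set X := C.image Prod.fst with hX
  have hXcard : X.card = k := by
    rw [hX, Finset.card_image_of_injOn (fun l hl l' hl' h => hdv l hl l' hl' h), hcard]
  set B := V.powerset.filter fun A => (∀ D ∈ S, SatC A D) ∧ ¬ SatC A C with hB
  have key : (B ×ˢ X.powerset).card ≤
      (V.powerset.filter fun A => ∀ D ∈ S, SatC A D).card := by
    apply Finset.card_le_card_of_injOn (fun q => (q.1 \ X) ∪ q.2)
    · rintro ⟨A, T⟩ hq
      rw [Finset.mem_coe, Finset.mem_product] at hq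
      obtain ⟨hA, hT⟩ := hq
      rw [hB, Finset.mem_filter, Finset.mem_powerset] at hA
      rw [Finset.mem_powerset] at hT
      obtain ⟨hAV, hsat, hnsat⟩ := hA
      rw [Finset.mem_coe, Finset.mem_filter, Finset.mem_powerset]
      constructor
      · exact Finset.union_subset ((Finset.sdiff_subset).trans hAV) (hT.trans (by rw [hX]; exact hsub))
      · intro D hD
        obtain ⟨l, hlD, hliff⟩ := hsat D hD
        have hlX : l.1 ∉ X := by
          intro hmem
          rw [hX, Finset.mem_image] at hmem
          obtain ⟨m, hmC, hm1⟩ := hmem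
          have hm : ¬ (m.1 ∈ A ↔ m.2 = true) := fun hiff => hnsat ⟨m, hmC, hiff⟩
          rw [hm1] at hm
          have hne : l.2 ≠ m.2 := by
            intro he
            rw [← he] at hm
            exact hm hliff
          have hlm : l = (m.1, !m.2) := by
            have : l.2 = !m.2 := by
              cases hb : m.2 <;> cases hb' : l.2 <;> simp_all
            rw [Prod.ext_iff]
            exact ⟨hm1.symm, this⟩
          exact hS D hD ⟨m, hmC, by rw [← hlm]; exact hlD⟩
        refine ⟨l, hlD, ?_⟩
        have hlT : l.1 ∉ T := fun h => hlX (hT h)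
        rw [Finset.mem_union, Finset.mem_sdiff]
        constructor
        · rintro (⟨h, _⟩ | h)
          · exact hliff.1 h
          · exact absurd h hlT
        · intro h
          exact Or.inl ⟨hliff.2 h, hlX⟩
    · rintro ⟨A, T⟩ h1 ⟨A', T'⟩ h2 heq
      simp only [Finset.mem_coe, Finset.mem_product, hB, Finset.mem_filter,
        Finset.mem_powerset] at h1 h2
      obtain ⟨⟨hAV, hsat, hnsat⟩, hT⟩ := h1
      obtain ⟨⟨hAV', hsat', hnsat'⟩, hT'⟩ := h2
      simp only at heq
      have hTT : T = T' := by
        have h3 : ∀ (U : Finset ℕ) (R : Finset ℕ), R ⊆ X → ((U \ X) ∪ R) ∩ X = R := by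
          intro U R hR
          ext x
          simp only [Finset.mem_inter, Finset.mem_union, Finset.mem_sdiff]
          constructor
          · rintro ⟨(⟨_, hx⟩ | hx), hX'⟩
            · exact absurd hX' hx
            · exact hx
          · intro hx
            exact ⟨Or.inr hx, hR hx⟩
        rw [← h3 A T hT, ← h3 A' T' hT', heq]
      have hAA : A = A' := by
        ext x
        by_cases hx : x ∈ X
        · rw [hX, Finset.mem_image] at hx
          obtain ⟨m, hmC, hm1⟩ := hx
          have hm : ¬ (m.1 ∈ A ↔ m.2 = true) := fun hiff => hnsat ⟨m, hmC, hiff⟩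
          have hm' : ¬ (m.1 ∈ A' ↔ m.2 = true) := fun hiff => hnsat' ⟨m, hmC, hiff⟩
          rw [hm1] at hm hm'
          constructor
          · intro h
            by_contra h'
            cases hb : m.2
            · rw [hb] at hm'; simp at hm'; exact h' hm'
            · rw [hb] at hm; simp at hm; exact hm h
          · intro h
            by_contra h'
            cases hb : m.2
            · rw [hb] at hm; simp at hm; exact h' hm
            · rw [hb] at hm'; simp at hm'; exact hm' h
        · have hxT : x ∉ T := fun h => hx (hT h)
          have hxT' : x ∉ T' := fun h => hx (hT' h)
          have e1 : (x ∈ A) ↔ x ∈ (A \ X) ∪ T := by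
            rw [Finset.mem_union, Finset.mem_sdiff]
            constructor
            · intro h; exact Or.inl ⟨h, hx⟩
            · rintro (⟨h, _⟩ | h)
              · exact h
              · exact absurd h hxT
          have e2 : (x ∈ A') ↔ x ∈ (A' \ X) ∪ T' := by
            rw [Finset.mem_union, Finset.mem_sdiff]
            constructor
            · intro h; exact Or.inl ⟨h, hx⟩
            · rintro (⟨h, _⟩ | h)
              · exact h
              · exact absurd h hxT'
          rw [e1, e2, heq]
      rw [Prod.ext_iff]
      exact ⟨hAA, hTT⟩
  have hprod : (B ×ˢ X.powerset).card = Bad V S C * 2 ^ k := by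
    rw [Finset.card_product, Finset.card_powerset, hXcard, hB, Bad]
  rw [W, mul_comm]
  rw [hprod] at key
  exact key

theorem main_bound (F : CnfFormula) (V : Finset ℕ) (k : ℕ)
    (hdv : ∀ C ∈ F, ∀ l ∈ C, ∀ l' ∈ C, l.1 = l'.1 → l = l')
    (hkcard : ∀ C ∈ F, C.card = k)
    (hVsub : ∀ C ∈ F, C.image Prod.fst ⊆ V)
    (d : ℕ) (hd : ∀ C ∈ F, (F.filter fun D => Confl C D).card ≤ d)
    (y : ℝ) (hy0 : 0 ≤ y) (hy1 : y < 1)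
    (hC1 : ∀ c : ℕ, c < d → ((2:ℝ) ^ k)⁻¹ ≤ y * (1 - y) ^ c) :
    ∀ (n : ℕ) (S : Finset Clause), S ⊆ F → S.card = n → ∀ C ∈ F, C ∉ S →
      (1 - y) ^ ((S.filter fun D => Confl C D).card) * (Bad V S C : ℝ) ≤
        ((2:ℝ) ^ k)⁻¹ * (W V S : ℝ) := by
  intro n
  induction n using Nat.strong_induction_on with
  | _ n ih =>
  intro S hSF hScard C hCF hCS
  classical
  set S₁ := S.filter (fun D => Confl C D) with hS₁
  set S₂ := S.filter (fun D => ¬ Confl C D) with hS₂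
  have hy1' : (0:ℝ) < 1 - y := by linarith
  have hbadeq : Bad V S C = Bad V S₂ C := bad_eq_bad_filter V S C
  have hnum : ((2:ℝ)^k) * (Bad V S₂ C : ℝ) ≤ (W V S₂ : ℝ) := by
    exact_mod_cast num_bound V C k (hdv C hCF) (hkcard C hCF) (hVsub C hCF) S₂
      (fun D hD => (Finset.mem_filter.1 hD).2)
  have h2k : (0:ℝ) < 2^k := by positivity
  have hnum' : (Bad V S₂ C : ℝ) ≤ ((2:ℝ)^k)⁻¹ * (W V S₂ : ℝ) := by
    rw [inv_mul_eq_div, le_div_iff₀' h2k]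
    exact hnum
  have hpeel : ∀ T : Finset Clause, T ⊆ S₁ →
      (1-y)^T.card * (W V S₂ : ℝ) ≤ (W V (S₂ ∪ T) : ℝ) := by
    intro T
    induction T using Finset.induction_on with
    | empty => intro _; simp
    | @insert D T' hDT' ihT =>
      intro hsub
      have hDS₁ : D ∈ S₁ := hsub (Finset.mem_insert_self D T')
      have hT'sub : T' ⊆ S₁ := fun x hx => hsub (Finset.mem_insert_of_mem hx)
      have hx := ihT hT'sub
      have hDS : D ∈ S := (Finset.mem_filter.1 hDS₁).1
      have hDF : D ∈ F := hSF hDS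
      have hConfl : Confl C D := (Finset.mem_filter.1 hDS₁).2
      have hDnS₂ : D ∉ S₂ := fun h => (Finset.mem_filter.1 h).2 hConfl
      have hDn : D ∉ S₂ ∪ T' := by
        rw [Finset.mem_union]
        rintro (h | h)
        exacts [hDnS₂ h, hDT' h]
      have hsubS : S₂ ∪ T' ⊆ S.erase D := by
        intro E hE
        rw [Finset.mem_erase]
        rcases Finset.mem_union.1 hE with h | h
        · exact ⟨fun he => hDnS₂ (he ▸ h), (Finset.mem_filter.1 h).1⟩
        · exact ⟨fun he => hDT' (he ▸ h), (Finset.mem_filter.1 (hT'sub h)).1⟩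
      have hcardlt : (S₂ ∪ T').card < n := by
        have h1 : (S₂ ∪ T').card ≤ (S.erase D).card := Finset.card_le_card hsubS
        have h2 : (S.erase D).card < S.card := Finset.card_erase_lt_of_mem hDS
        omega
      have hSTF : S₂ ∪ T' ⊆ F :=
        Finset.union_subset ((Finset.filter_subset _ _).trans hSF)
          (hT'sub.trans ((Finset.filter_subset _ _).trans hSF))
      have hmain := ih _ hcardlt (S₂ ∪ T') hSTF rfl D hDF hDn
      have hCfil : C ∈ F.filter (fun E => Confl D E) :=
        Finset.mem_filter.2 ⟨hCF, confl_symm hConfl⟩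
      have hsubfil : (S₂ ∪ T').filter (fun E => Confl D E) ⊆
          (F.filter (fun E => Confl D E)).erase C := by
        intro E hE
        rw [Finset.mem_filter] at hE
        rw [Finset.mem_erase, Finset.mem_filter]
        have hES : E ∈ S := by
          rcases Finset.mem_union.1 hE.1 with h | h
          exacts [(Finset.mem_filter.1 h).1, (Finset.mem_filter.1 (hT'sub h)).1]
        exact ⟨fun he => hCS (he ▸ hES), hSTF hE.1, hE.2⟩
      have hcnt : ((S₂ ∪ T').filter (fun E => Confl D E)).card < d := by
        have h1 := Finset.card_le_card hsubfil
        have h2 := Finset.card_erase_of_mem hCfil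
        have h3 := hd D hDF
        have h4 : 0 < (F.filter (fun E => Confl D E)).card := Finset.card_pos.2 ⟨C, hCfil⟩
        omega
      have hBD : (Bad V (S₂ ∪ T') D : ℝ) ≤ y * (W V (S₂ ∪ T') : ℝ) := by
        set c := ((S₂ ∪ T').filter (fun E => Confl D E)).card with hc
        have h1 := hC1 c hcnt
        have hpowpos : (0:ℝ) < (1-y)^c := pow_pos hy1' c
        have hWnn : (0:ℝ) ≤ (W V (S₂ ∪ T') : ℝ) := Nat.cast_nonneg _
        have h2 : (1-y)^c * (Bad V (S₂ ∪ T') D : ℝ) ≤ (y * (1-y)^c) * (W V (S₂ ∪ T') : ℝ) :=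
          le_trans hmain (mul_le_mul_of_nonneg_right h1 hWnn)
        have h3 : (1-y)^c * (Bad V (S₂ ∪ T') D : ℝ) ≤ (1-y)^c * (y * (W V (S₂ ∪ T') : ℝ)) := by
          nlinarith [h2]
        exact le_of_mul_le_mul_left h3 hpowpos
      have hWid : (W V (insert D (S₂ ∪ T')) : ℝ) + (Bad V (S₂ ∪ T') D : ℝ)
          = (W V (S₂ ∪ T') : ℝ) := by
        exact_mod_cast congrArg (Nat.cast : ℕ → ℝ) (W_insert V (S₂ ∪ T') D)
      have hUI : S₂ ∪ insert D T' = insert D (S₂ ∪ T') := Finset.union_insert D S₂ T'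
      calc (1-y)^(insert D T').card * (W V S₂ : ℝ)
          = (1-y) * ((1-y)^T'.card * (W V S₂ : ℝ)) := by
            rw [Finset.card_insert_of_notMem hDT', pow_succ]; ring
        _ ≤ (1-y) * (W V (S₂ ∪ T') : ℝ) := mul_le_mul_of_nonneg_left hx (le_of_lt hy1')
        _ = (W V (S₂ ∪ T') : ℝ) - y * (W V (S₂ ∪ T') : ℝ) := by ring
        _ ≤ (W V (S₂ ∪ T') : ℝ) - (Bad V (S₂ ∪ T') D : ℝ) := by linarith [hBD]
        _ = (W V (insert D (S₂ ∪ T')) : ℝ) := by linarith [hWid]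
        _ = (W V (S₂ ∪ insert D T') : ℝ) := by rw [hUI]
  have hfin := hpeel S₁ (Finset.Subset.refl S₁)
  have hU : S₂ ∪ S₁ = S := by
    rw [hS₁, hS₂, Finset.union_comm]
    exact Finset.filter_union_filter_not_eq _ S
  calc (1-y)^(S₁.card) * (Bad V S C : ℝ)
      = (1-y)^(S₁.card) * (Bad V S₂ C : ℝ) := by rw [hbadeq]
    _ ≤ (1-y)^(S₁.card) * (((2:ℝ)^k)⁻¹ * (W V S₂ : ℝ)) :=
        mul_le_mul_of_nonneg_left hnum' (pow_nonneg (le_of_lt hy1') _)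
    _ = ((2:ℝ)^k)⁻¹ * ((1-y)^(S₁.card) * (W V S₂ : ℝ)) := by ring
    _ ≤ ((2:ℝ)^k)⁻¹ * (W V (S₂ ∪ S₁) : ℝ) := by
        apply mul_le_mul_of_nonneg_left hfin
        positivity
    _ = ((2:ℝ)^k)⁻¹ * (W V S : ℝ) := by rw [hU]

theorem W_pos (F : CnfFormula) (V : Finset ℕ) (k : ℕ)
    (hdv : ∀ C ∈ F, ∀ l ∈ C, ∀ l' ∈ C, l.1 = l'.1 → l = l')
    (hkcard : ∀ C ∈ F, C.card = k)
    (hVsub : ∀ C ∈ F, C.image Prod.fst ⊆ V)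
    (d : ℕ) (hd : ∀ C ∈ F, (F.filter fun D => Confl C D).card ≤ d)
    (y : ℝ) (hy0 : 0 ≤ y) (hy1 : y < 1)
    (hC1 : ∀ c : ℕ, c < d → ((2:ℝ) ^ k)⁻¹ ≤ y * (1 - y) ^ c)
    (hC2 : ((2:ℝ) ^ k)⁻¹ < (1 - y) ^ d) :
    ∀ (n : ℕ) (S : Finset Clause), S ⊆ F → S.card = n → 0 < W V S := by
  intro n
  induction n with
  | zero =>
    intro S hSF hcard
    rw [Finset.card_eq_zero] at hcard
    subst hcard
    rw [W, Finset.filter_true_of_mem (fun A _ => fun C hC => absurd hC (Finset.notMem_empty C))]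
    exact Finset.card_pos.2 ⟨∅, Finset.mem_powerset.2 (Finset.empty_subset V)⟩
  | succ n ihn =>
    intro S hSF hcard
    classical
    have hne : S.Nonempty := Finset.card_pos.1 (by omega)
    obtain ⟨C, hCS⟩ := hne
    set S' := S.erase C with hS'
    have hins : insert C S' = S := Finset.insert_erase hCS
    have hS'F : S' ⊆ F := (Finset.erase_subset _ _).trans hSF
    have hcard' : S'.card = n := by
      rw [hS', Finset.card_erase_of_mem hCS, hcard]
      omega
    have hW' := ihn S' hS'F hcard'
    have hCF : C ∈ F := hSF hCS
    have hCnS' : C ∉ S' := Finset.notMem_erase C S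
    have hmain := main_bound F V k hdv hkcard hVsub d hd y hy0 hy1 hC1 n S' hS'F hcard' C hCF hCnS'
    set c := (S'.filter fun D => Confl C D).card with hc
    have hcd : c ≤ d :=
      le_trans (Finset.card_le_card (Finset.filter_subset_filter _ hS'F)) (hd C hCF)
    have h1y0 : (0:ℝ) ≤ 1 - y := by linarith
    have h1y1 : (1:ℝ) - y ≤ 1 := by linarith
    have hmon : (1-y)^d ≤ (1-y)^c := pow_le_pow_of_le_one h1y0 h1y1 hcd
    have hWpos : (0:ℝ) < (W V S' : ℝ) := by exact_mod_cast hW'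
    have h2 : (1-y)^d * (Bad V S' C : ℝ) < (1-y)^d * (W V S' : ℝ) := by
      calc (1-y)^d * (Bad V S' C : ℝ) ≤ (1-y)^c * (Bad V S' C : ℝ) :=
            mul_le_mul_of_nonneg_right hmon (Nat.cast_nonneg _)
        _ ≤ ((2:ℝ)^k)⁻¹ * (W V S' : ℝ) := hmain
        _ < (1-y)^d * (W V S' : ℝ) := mul_lt_mul_of_pos_right hC2 hWpos
    have hdpos : (0:ℝ) < (1-y)^d := pow_pos (by linarith) d
    have hBW : (Bad V S' C : ℝ) < (W V S' : ℝ) := (mul_lt_mul_iff_right₀ hdpos).1 h2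
    have hBWn : Bad V S' C < W V S' := by exact_mod_cast hBW
    have hid := W_insert V S' C
    rw [hins] at hid
    omega

end BalLLL

/-- Every balanced `(k, s)`-CNF formula with `s = ⌊2^(k+1)/(e·k)⌋` is satisfiable:
every CNF formula in which each clause has exactly `k` literals, each variable occurs in
at most `s` clauses and each literal occurs in at most `s/2` clauses is satisfiable.
In other words, `f_bal(k) ≥ ⌊2^(k+1)/(e·k)⌋`. -/
theorem balanced_lll_lower_bound (k : ℕ) (hk : 1 ≤ k) (F : CnfFormula)
    (hF : isKCNF F k) (s : ℕ) (hs : s = ⌊(2 : ℝ) ^ (k + 1) / (Real.exp 1 * k)⌋₊)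
    (hvar : ∀ x : ℕ, varOcc F x ≤ s)
    (hlit : ∀ l : Lit, (litOcc F l : ℝ) ≤ (s : ℝ) / 2) :
    CnfSatisfiable F := by
  classical
  set V := F.sup (fun C => C.image Prod.fst) with hV
  have hVsub : ∀ C ∈ F, C.image Prod.fst ⊆ V := fun C hC => Finset.le_sup hC
  have hdv : ∀ C ∈ F, ∀ l ∈ C, ∀ l' ∈ C, l.1 = l'.1 → l = l' := fun C hC => (hF C hC).2
  have hkcard : ∀ C ∈ F, C.card = k := fun C hC => (hF C hC).1
  have hlitn : ∀ l : Lit, litOcc F l ≤ s / 2 := by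
    intro l
    have h := hlit l
    have h2 : (litOcc F l : ℝ) * 2 ≤ (s:ℝ) := by linarith
    have h3 : litOcc F l * 2 ≤ s := by exact_mod_cast h2
    omega
  set d := k * (s / 2) with hd_def
  have hd : ∀ C ∈ F, (F.filter fun D => BalLLL.Confl C D).card ≤ d := by
    intro C hC
    have hsub : F.filter (fun D => BalLLL.Confl C D) ⊆
        C.biUnion (fun l => F.filter fun D => (l.1, !l.2) ∈ D) := by
      intro D hD
      rw [Finset.mem_filter] at hD
      obtain ⟨hDF, l, hlC, hlD⟩ := hD
      rw [Finset.mem_biUnion]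
      exact ⟨l, hlC, Finset.mem_filter.2 ⟨hDF, hlD⟩⟩
    calc (F.filter fun D => BalLLL.Confl C D).card
        ≤ (C.biUnion (fun l => F.filter fun D => (l.1, !l.2) ∈ D)).card :=
          Finset.card_le_card hsub
      _ ≤ ∑ l ∈ C, (F.filter fun D => (l.1, !l.2) ∈ D).card := Finset.card_biUnion_le
      _ ≤ ∑ _l ∈ C, s / 2 := Finset.sum_le_sum (fun l _ => hlitn (l.1, !l.2))
      _ = k * (s / 2) := by rw [Finset.sum_const, hkcard C hC, smul_eq_mul]
  have he : (0:ℝ) < Real.exp 1 := Real.exp_pos 1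
  have hkR : (1:ℝ) ≤ (k:ℝ) := by exact_mod_cast hk
  have hkpos : (0:ℝ) < (k:ℝ) := by linarith
  have hekpos : (0:ℝ) < Real.exp 1 * k := by positivity
  have hsle : (s:ℝ) ≤ (2:ℝ)^(k+1) / (Real.exp 1 * k) := by
    rw [hs]; exact Nat.floor_le (by positivity)
  have hs2 : ((s / 2 : ℕ) : ℝ) ≤ (s:ℝ) / 2 := Nat.cast_div_le
  have hdR : (d : ℝ) = (k:ℝ) * ((s/2 : ℕ) : ℝ) := by rw [hd_def]; push_cast; ring
  have hpow : (2:ℝ)^(k+1) = 2 * 2^k := by rw [pow_succ]; ring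
  have h1s : (s:ℝ) * (Real.exp 1 * k) ≤ 2^(k+1) := (le_div_iff₀ hekpos).mp hsle
  have hed : Real.exp 1 * (d:ℝ) ≤ 2^k := by
    have h2 : Real.exp 1 * (d:ℝ) ≤ Real.exp 1 * ((k:ℝ) * ((s:ℝ)/2)) := by
      rw [hdR]
      have h5 := mul_le_mul_of_nonneg_left hs2 (le_of_lt hkpos)
      nlinarith
    nlinarith
  have hd3 : d = 0 ∨ 3 ≤ d := by
    by_cases h0 : s / 2 = 0
    · left; rw [hd_def, h0, Nat.mul_zero]
    · right
      have hs2' : 2 ≤ s := by omega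
      have hek2 : Real.exp 1 * (k:ℝ) ≤ 2^k := by
        have h2s : (2:ℝ) ≤ (s:ℝ) := by exact_mod_cast hs2'
        nlinarith
      have hk3 : 3 ≤ k := by
        by_contra hlt
        push_neg at hlt
        interval_cases k
        · norm_num at hek2; linarith [Real.exp_one_gt_d9]
        · norm_num at hek2; linarith [Real.exp_one_gt_d9]
      calc 3 ≤ k := hk3
        _ ≤ k * (s/2) := Nat.le_mul_of_pos_right k (by omega)
  set y : ℝ := if d = 0 then 0 else ((d:ℝ))⁻¹ with hy_def
  have hy0 : 0 ≤ y := by rw [hy_def]; split <;> positivity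
  have hy1 : y < 1 := by
    rw [hy_def]; split
    · norm_num
    · rename_i hne
      have h3 : 3 ≤ d := hd3.resolve_left hne
      have : (1:ℝ) < (d:ℝ) := by
        have : (3:ℝ) ≤ (d:ℝ) := by exact_mod_cast h3
        linarith
      exact inv_lt_one_of_one_lt₀ this
  have hC1 : ∀ c : ℕ, c < d → ((2:ℝ)^k)⁻¹ ≤ y * (1-y)^c := by
    intro c hc
    have hne : d ≠ 0 := by omega
    have h3 : 3 ≤ d := hd3.resolve_left hne
    rw [hy_def, if_neg hne]
    have hdpos : (0:ℝ) < (d:ℝ) := by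
      have : (3:ℝ) ≤ (d:ℝ) := by exact_mod_cast h3
      linarith
    have hkey := BalLLL.pow_ge_exp_neg_one d (by omega) c (by
      have hcd : (c:ℝ) + 1 ≤ (d:ℝ) := by exact_mod_cast hc
      linarith)
    have h1 : ((2:ℝ)^k)⁻¹ ≤ (Real.exp 1 * (d:ℝ))⁻¹ :=
      inv_anti₀ (by positivity) hed
    calc ((2:ℝ)^k)⁻¹ ≤ (Real.exp 1 * (d:ℝ))⁻¹ := h1
      _ = (d:ℝ)⁻¹ * (Real.exp 1)⁻¹ := by rw [mul_inv]; ring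
      _ ≤ (d:ℝ)⁻¹ * (1 - (d:ℝ)⁻¹)^c := mul_le_mul_of_nonneg_left hkey (by positivity)
  have hC2 : ((2:ℝ)^k)⁻¹ < (1-y)^d := by
    rcases hd3 with h0 | h3
    · rw [hy_def, if_pos h0, h0]
      have h2k : (2:ℝ) ≤ 2^k := by
        calc (2:ℝ) = 2^1 := (pow_one 2).symm
          _ ≤ 2^k := pow_le_pow_right₀ (by norm_num) hk
      rw [pow_zero]
      rw [inv_lt_one₀ (by positivity)]
      linarith
    · have hne : d ≠ 0 := by omega
      rw [hy_def, if_neg hne]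
      have hdR3 : (3:ℝ) ≤ (d:ℝ) := by exact_mod_cast h3
      have hdpos : (0:ℝ) < (d:ℝ) := by linarith
      obtain ⟨m, hm⟩ : ∃ m, d = m + 1 := ⟨d - 1, by omega⟩
      have hkey := BalLLL.pow_ge_exp_neg_one d (by omega) m (by
        have : ((m:ℝ)) = (d:ℝ) - 1 := by rw [hm]; push_cast; ring
        linarith)
      have hinv3 : (d:ℝ)⁻¹ ≤ 1/3 := by
        rw [inv_le_comm₀ (by linarith) (by norm_num)]
        norm_num
        linarith
      have h1y : (0:ℝ) < 1 - (d:ℝ)⁻¹ := by linarith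
      have h1 : ((2:ℝ)^k)⁻¹ ≤ (Real.exp 1 * (d:ℝ))⁻¹ :=
        inv_anti₀ (by positivity) hed
      have h2 : (Real.exp 1 * (d:ℝ))⁻¹ < (1 - (d:ℝ)⁻¹) * (Real.exp 1)⁻¹ := by
        rw [mul_inv]
        have he' : (0:ℝ) < (Real.exp 1)⁻¹ := by positivity
        have hlt : (d:ℝ)⁻¹ < 1 - (d:ℝ)⁻¹ := by linarith
        nlinarith
      calc ((2:ℝ)^k)⁻¹ ≤ (Real.exp 1 * (d:ℝ))⁻¹ := h1
        _ < (1 - (d:ℝ)⁻¹) * (Real.exp 1)⁻¹ := h2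
        _ ≤ (1 - (d:ℝ)⁻¹) * (1 - (d:ℝ)⁻¹)^m :=
            mul_le_mul_of_nonneg_left hkey (le_of_lt h1y)
        _ = (1 - (d:ℝ)⁻¹)^d := by rw [hm, pow_succ]; ring
  have hpos := BalLLL.W_pos F V k hdv hkcard hVsub d hd y hy0 hy1 hC1 hC2 F.card F
    (Finset.Subset.refl F) rfl
  rw [BalLLL.W] at hpos
  obtain ⟨A, hA⟩ := Finset.card_pos.1 hpos
  rw [Finset.mem_filter] at hA
  refine ⟨fun x => if x ∈ A then true else false, ?_⟩
  intro C hC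
  obtain ⟨l, hlC, hliff⟩ := hA.2 C hC
  refine ⟨l, hlC, ?_⟩
  by_cases h : l.1 ∈ A
  · simp only [if_pos h]
    exact (hliff.1 h).symm
  · simp only [if_neg h]
    cases hb : l.2
    · rfl
    · exact absurd (hliff.2 hb) h
end

section
/- If there exists a (k,s)-hypergraph, i.e. a k-uniform hypergraph with maximum degree at most s on which Maker has a winning pairing strategy, then there exists an unsatisfiable balanced (k, 2s)-CNF formula, i.e. an unsatisfiable CNF formula in which every clause contains exactly k literals and every literal occurs in at most s clauses. -/
open Finset

section AuxCNF

variable {α : Type*} [DecidableEq α]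

/-- Variable of the literal associated to a vertex `v` in copy `c`. -/
def varOfD (v₀ : α) (idx : Finset α → ℕ) (pr : α → Finset α) (c : Bool) (v : α) : ℕ :=
  if v = v₀ then 0 else 2 * idx (pr v) + 1 + (if c then 1 else 0)

/-- Polarity of the literal associated to a vertex `v` in copy `c`. -/
def polOfD (v₀ : α) (A : Finset α → α) (pr : α → Finset α) (c : Bool) (v : α) : Bool :=
  if v = v₀ then c else decide (v = A (pr v))

/-- The complemented literal associated to a vertex. -/
def litCD (v₀ : α) (idx : Finset α → ℕ) (pr : α → Finset α) (A : Finset α → α)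
    (c : Bool) (v : α) : Lit :=
  (varOfD v₀ idx pr c v, ! polOfD v₀ A pr c v)

/-- The clause of a hyperedge in copy `c`. -/
def ClD (v₀ : α) (idx : Finset α → ℕ) (pr : α → Finset α) (A : Finset α → α)
    (c : Bool) (e : Finset α) : Clause :=
  e.image (litCD v₀ idx pr A c)

end AuxCNF

/-- If there is a `(k,s)`-hypergraph (a `k`-uniform hypergraph with maximum degree at
most `s` on which Maker has a winning pairing strategy), then there is an unsatisfiable
balanced `(k,2s)`-CNF formula: every clause has exactly `k` literals, every variable
occurs in at most `2s` clauses and every literal occurs in at most `s` clauses. -/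
theorem hypergraph_to_unsat_balanced_CNF {α : Type*} [DecidableEq α] (k s : ℕ)
    (H : FinHypergraph α) (hU : H.IsUniform k) (hdeg : ∀ v : α, H.degree v ≤ s)
    (hwin : H.MakerPairingWin) :
    ∃ F : CnfFormula, isKCNF F k ∧
      (∀ x : ℕ, varOcc F x ≤ 2 * s) ∧
      (∀ l : Lit, litOcc F l ≤ s) ∧
      ¬ CnfSatisfiable F := by
  classical
  obtain ⟨v₀, hv₀V, P, hP, hdisjP, hleft, hwinS⟩ := hwin
  haveI : Inhabited α := ⟨v₀⟩
  -- choose the two elements of each pair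
  have hexAB : ∀ p : Finset α, ∃ a b : α, p ∈ P → a ≠ b ∧ p = {a, b} := by
    intro p
    by_cases hp : p ∈ P
    · obtain ⟨a, b, hab, rfl⟩ := Finset.card_eq_two.1 (hP p hp).1
      exact ⟨a, b, fun _ => ⟨hab, rfl⟩⟩
    · exact ⟨default, default, fun h => absurd h hp⟩
  choose A B hAB using hexAB
  -- the pair containing a vertex
  have hexpr : ∀ v : α, ∃ p : Finset α, v ∈ P.sup id → p ∈ P ∧ v ∈ p := by
    intro v
    by_cases hv : v ∈ P.sup id
    · obtain ⟨p, hp, hvp⟩ := Finset.mem_sup.1 hv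
      exact ⟨p, fun _ => ⟨hp, hvp⟩⟩
    · exact ⟨∅, fun h => absurd h hv⟩
  choose pr hpr using hexpr
  have hprUniq : ∀ v : α, ∀ p ∈ P, v ∈ p → pr v = p := by
    intro v p hp hvp
    have hvW : v ∈ P.sup id := Finset.mem_sup.2 ⟨p, hp, hvp⟩
    obtain ⟨hprP, hvpr⟩ := hpr v hvW
    by_contra hne
    exact Finset.disjoint_left.1 (hdisjP _ hprP _ hp hne) hvpr hvp
  -- an injective index on pairs
  let idx : Finset α → ℕ := fun p => if h : p ∈ P then (P.equivFin ⟨p, h⟩ : Fin P.card) else 0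
  have hidx : ∀ p ∈ P, ∀ q ∈ P, idx p = idx q → p = q := by
    intro p hp q hq h
    simp only [idx, dif_pos hp, dif_pos hq] at h
    have h2 : P.equivFin ⟨p, hp⟩ = P.equivFin ⟨q, hq⟩ := Fin.ext h
    have h3 := P.equivFin.injective h2
    exact congrArg Subtype.val h3
  have hWsub : P.sup id ⊆ H.V.erase v₀ := Finset.sup_le fun p hp => (hP p hp).2
  have hWne : ∀ v ∈ P.sup id, v ≠ v₀ := fun v hv => (Finset.mem_erase.1 (hWsub hv)).1
  -- variable analysis
  have hvar : ∀ (c c' : Bool) (v w : α), v ∈ insert v₀ (P.sup id) → w ∈ insert v₀ (P.sup id) →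
      varOfD v₀ idx pr c v = varOfD v₀ idx pr c' w →
      (v = v₀ ∧ w = v₀) ∨ (v ≠ v₀ ∧ w ≠ v₀ ∧ pr v = pr w ∧ c = c') := by
    intro c c' v w hv hw h
    rcases Finset.mem_insert.1 hv with rfl | hvW
    · rcases Finset.mem_insert.1 hw with rfl | hwW
      · exact Or.inl ⟨rfl, rfl⟩
      · have hwne := hWne w hwW
        simp only [varOfD, if_pos rfl, if_neg hwne] at h
        cases c' <;> simp at h
    · have hvne := hWne v hvW
      rcases Finset.mem_insert.1 hw with rfl | hwW
      · simp only [varOfD, if_neg hvne, if_pos rfl] at h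
        cases c <;> simp at h
      · have hwne := hWne w hwW
        simp only [varOfD, if_neg hvne, if_neg hwne] at h
        have hcc : c = c' ∧ idx (pr v) = idx (pr w) := by
          cases c <;> cases c' <;> simp at h ⊢ <;> omega
        exact Or.inr ⟨hvne, hwne, hidx _ (hpr v hvW).1 _ (hpr w hwW).1 hcc.2, hcc.1⟩
  -- injectivity of the literal map across edges
  have hlitinj : ∀ (c c' : Bool) (v w : α), v ∈ insert v₀ (P.sup id) →
      w ∈ insert v₀ (P.sup id) →
      litCD v₀ idx pr A c v = litCD v₀ idx pr A c' w → v = w ∧ c = c' := by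
    intro c c' v w hv hw h
    have h1 : varOfD v₀ idx pr c v = varOfD v₀ idx pr c' w := congrArg Prod.fst h
    have h2 : polOfD v₀ A pr c v = polOfD v₀ A pr c' w := by
      have := congrArg Prod.snd h
      simpa [litCD] using this
    rcases hvar c c' v w hv hw h1 with ⟨rfl, h0⟩ | ⟨hvne, hwne, hprvw, rfl⟩
    · subst h0
      simp only [polOfD, if_pos rfl] at h2
      exact ⟨rfl, h2⟩
    · refine ⟨?_, rfl⟩
      have hvW : v ∈ P.sup id := (Finset.mem_insert.1 hv).resolve_left hvne
      have hwW : w ∈ P.sup id := (Finset.mem_insert.1 hw).resolve_left hwne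
      simp only [polOfD, if_neg hvne, if_neg hwne, hprvw] at h2
      have hpP : pr w ∈ P := (hpr w hwW).1
      have hvp : v ∈ pr w := hprvw ▸ (hpr v hvW).2
      have hwp : w ∈ pr w := (hpr w hwW).2
      obtain ⟨hABne, hpeq⟩ := hAB (pr w) hpP
      by_cases hvA : v = A (pr w)
      · have hwA : w = A (pr w) := by
          have h3 : decide (w = A (pr w)) = true := by rw [← h2]; exact decide_eq_true hvA
          exact of_decide_eq_true h3
        exact hvA.trans hwA.symm
      · have hwA : w ≠ A (pr w) := by
          intro hh
          apply hvA
          have h3 : decide (v = A (pr w)) = true := by rw [h2]; exact decide_eq_true hh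
          exact of_decide_eq_true h3
        have hvB : v = B (pr w) := by
          have := hpeq ▸ hvp
          rcases Finset.mem_insert.1 this with h | h
          · exact absurd h hvA
          · simpa using h
        have hwB : w = B (pr w) := by
          have := hpeq ▸ hwp
          rcases Finset.mem_insert.1 this with h | h
          · exact absurd h hwA
          · simpa using h
        exact hvB.trans hwB.symm
  -- injectivity of the variable map on a single good edge
  have hedge : ∀ (c c' : Bool) (e : Finset α), e ⊆ insert v₀ (P.sup id) →
      (∀ p ∈ P, (e ∩ p).card ≤ 1) →
      ∀ v ∈ e, ∀ w ∈ e, varOfD v₀ idx pr c v = varOfD v₀ idx pr c' w → v = w := by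
    intro c c' e hsub hone v hve w hwe h
    rcases hvar c c' v w (hsub hve) (hsub hwe) h with ⟨rfl, h0⟩ | ⟨hvne, hwne, hprvw, _⟩
    · exact h0.symm
    · have hvW : v ∈ P.sup id := (Finset.mem_insert.1 (hsub hve)).resolve_left hvne
      have hwW : w ∈ P.sup id := (Finset.mem_insert.1 (hsub hwe)).resolve_left hwne
      have hpP : pr w ∈ P := (hpr w hwW).1
      have hvp : v ∈ pr w := hprvw ▸ (hpr v hvW).2
      have hwp : w ∈ pr w := (hpr w hwW).2
      exact Finset.card_le_one.1 (hone _ hpP) v (Finset.mem_inter.2 ⟨hve, hvp⟩)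
        w (Finset.mem_inter.2 ⟨hwe, hwp⟩)
  -- the good edges and the formula
  set E' : Finset (Finset α) := H.E.filter
    (fun e => e ⊆ insert v₀ (P.sup id) ∧ ∀ p ∈ P, (e ∩ p).card ≤ 1) with hE'def
  set F : CnfFormula :=
    (E'.image (ClD v₀ idx pr A false)) ∪ (E'.image (ClD v₀ idx pr A true)) with hFdef
  have hE' : ∀ e ∈ E', e ∈ H.E ∧ e ⊆ insert v₀ (P.sup id) ∧ ∀ p ∈ P, (e ∩ p).card ≤ 1 := by
    intro e he
    have := Finset.mem_filter.1 he
    exact ⟨this.1, this.2.1, this.2.2⟩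
  have hFmem : ∀ C ∈ F, ∃ c : Bool, ∃ e ∈ E', C = ClD v₀ idx pr A c e := by
    intro C hC
    rcases Finset.mem_union.1 hC with h | h <;> obtain ⟨e, he, hh⟩ := Finset.mem_image.1 h
    · exact ⟨false, e, he, hh.symm⟩
    · exact ⟨true, e, he, hh.symm⟩
  have hFmem' : ∀ (c : Bool), ∀ e ∈ E', ClD v₀ idx pr A c e ∈ F := by
    intro c e he
    cases c
    · exact Finset.mem_union_left _ (Finset.mem_image.2 ⟨e, he, rfl⟩)
    · exact Finset.mem_union_right _ (Finset.mem_image.2 ⟨e, he, rfl⟩)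
  have hlit : ∀ l : Lit, litOcc F l ≤ s := by
    intro l
    by_cases hex : ∃ (c : Bool) (v : α), v ∈ insert v₀ (P.sup id) ∧ litCD v₀ idx pr A c v = l
    · obtain ⟨c₀, u, hu, hlu⟩ := hex
      have hsubF : F.filter (fun C => l ∈ C) ⊆
          (H.E.filter fun e => u ∈ e).image (ClD v₀ idx pr A c₀) := by
        intro C hC
        obtain ⟨hCF, hlC⟩ := Finset.mem_filter.1 hC
        obtain ⟨c, e, heE', rfl⟩ := hFmem C hCF
        obtain ⟨heE, hsub, hone⟩ := hE' e heE'
        simp only [ClD, Finset.mem_image] at hlC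
        obtain ⟨w, hwe, hwl⟩ := hlC
        obtain ⟨rfl, rfl⟩ := hlitinj c c₀ w u (hsub hwe) hu (hwl.trans hlu.symm)
        exact Finset.mem_image.2 ⟨e, Finset.mem_filter.2 ⟨heE, hwe⟩, rfl⟩
      calc litOcc F l ≤ ((H.E.filter fun e => u ∈ e).image (ClD v₀ idx pr A c₀)).card :=
            Finset.card_le_card hsubF
        _ ≤ (H.E.filter fun e => u ∈ e).card := Finset.card_image_le
        _ ≤ s := hdeg u
    · have hempty : F.filter (fun C => l ∈ C) = ∅ := by
        rw [Finset.filter_eq_empty_iff]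
        intro C hCF hlC
        obtain ⟨c, e, heE', rfl⟩ := hFmem C hCF
        obtain ⟨heE, hsub, hone⟩ := hE' e heE'
        simp only [ClD, Finset.mem_image] at hlC
        obtain ⟨w, hwe, hwl⟩ := hlC
        exact hex ⟨c, w, hsub hwe, hwl⟩
      simp [litOcc, hempty]
  refine ⟨F, ?_, ?_, hlit, ?_⟩
  · -- isKCNF
    intro C hC
    obtain ⟨c, e, heE', rfl⟩ := hFmem C hC
    obtain ⟨heE, hsub, hone⟩ := hE' e heE'
    constructor
    · rw [ClD, Finset.card_image_of_injOn, hU.2 e heE]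
      intro v hv w hw h
      exact hedge c c e hsub hone v hv w hw (congrArg Prod.fst h)
    · intro l hl l' hl' hvv
      simp only [ClD, Finset.mem_image] at hl hl'
      obtain ⟨v, hv, rfl⟩ := hl
      obtain ⟨w, hw, rfl⟩ := hl'
      have hvw : v = w := hedge c c e hsub hone v hv w hw hvv
      rw [hvw]
  · -- varOcc
    intro x
    have hsub : F.filter (fun C => ∃ b : Bool, (x, b) ∈ C) ⊆
        (F.filter fun C => ((x, false) : Lit) ∈ C) ∪ (F.filter fun C => ((x, true) : Lit) ∈ C) := by
      intro C hC
      obtain ⟨hCF, b, hb⟩ := Finset.mem_filter.1 hC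
      cases b
      · exact Finset.mem_union_left _ (Finset.mem_filter.2 ⟨hCF, hb⟩)
      · exact Finset.mem_union_right _ (Finset.mem_filter.2 ⟨hCF, hb⟩)
    calc varOcc F x ≤ ((F.filter fun C => ((x, false) : Lit) ∈ C) ∪
          (F.filter fun C => ((x, true) : Lit) ∈ C)).card := Finset.card_le_card hsub
      _ ≤ (F.filter fun C => ((x, false) : Lit) ∈ C).card +
          (F.filter fun C => ((x, true) : Lit) ∈ C).card := Finset.card_union_le _ _
      _ ≤ s + s := Nat.add_le_add (hlit _) (hlit _)
      _ = 2 * s := (two_mul s).symm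
  · -- unsatisfiable
    rintro ⟨σ, hσ⟩
    set c : Bool := σ 0 with hc
    set S : Finset α := (P.sup id).filter
      (fun v => σ (varOfD v₀ idx pr c v) = polOfD v₀ A pr c v) with hSdef
    have hSsub : S ⊆ P.sup id := Finset.filter_subset _ _
    have hS1 : ∀ p ∈ P, (S ∩ p).card = 1 := by
      intro p hp
      obtain ⟨hABne, hpeq⟩ := hAB p hp
      set a := A p with ha
      set b := B p with hb
      have hap : a ∈ p := by rw [hpeq]; exact Finset.mem_insert_self _ _
      have hbp : b ∈ p := by rw [hpeq]; simp
      have haW : a ∈ P.sup id := Finset.mem_sup.2 ⟨p, hp, hap⟩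
      have hbW : b ∈ P.sup id := Finset.mem_sup.2 ⟨p, hp, hbp⟩
      have hane := hWne _ haW
      have hbne := hWne _ hbW
      have hpra : pr a = p := hprUniq _ p hp hap
      have hprb : pr b = p := hprUniq _ p hp hbp
      have hvara : varOfD v₀ idx pr c a = 2 * idx p + 1 + (if c then 1 else 0) := by
        rw [varOfD, if_neg hane, hpra]
      have hvarb : varOfD v₀ idx pr c b = 2 * idx p + 1 + (if c then 1 else 0) := by
        rw [varOfD, if_neg hbne, hprb]
      have hpola : polOfD v₀ A pr c a = true := by
        rw [polOfD, if_neg hane, hpra, ← ha]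
        exact decide_eq_true rfl
      have hpolb : polOfD v₀ A pr c b = false := by
        rw [polOfD, if_neg hbne, hprb, ← ha]
        exact decide_eq_false (fun h => hABne h.symm)
      have hmemS : ∀ y ∈ p, (y ∈ S ↔ σ (varOfD v₀ idx pr c y) = polOfD v₀ A pr c y) := by
        intro y hy
        have hyW : y ∈ P.sup id := Finset.mem_sup.2 ⟨p, hp, hy⟩
        exact ⟨fun h => (Finset.mem_filter.1 h).2, fun h => Finset.mem_filter.2 ⟨hyW, h⟩⟩
      have hyab : ∀ y ∈ p, y = a ∨ y = b := by
        intro y hy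
        rw [hpeq] at hy
        rcases Finset.mem_insert.1 hy with h | h
        · exact Or.inl h
        · exact Or.inr (Finset.mem_singleton.1 h)
      cases hσv : σ (2 * idx p + 1 + (if c then 1 else 0)) with
      | true =>
        have hSp : S ∩ p = {a} := by
          ext y
          simp only [Finset.mem_inter, Finset.mem_singleton]
          constructor
          · rintro ⟨hyS, hyp⟩
            rcases hyab y hyp with rfl | rfl
            · rfl
            · exfalso
              have h5 := (hmemS _ hbp).1 hyS
              rw [hvarb, hσv, hpolb] at h5
              exact Bool.noConfusion h5
          · rintro rfl
            exact ⟨(hmemS _ hap).2 (by rw [hvara, hσv, hpola]), hap⟩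
        rw [hSp, Finset.card_singleton]
      | false =>
        have hSp : S ∩ p = {b} := by
          ext y
          simp only [Finset.mem_inter, Finset.mem_singleton]
          constructor
          · rintro ⟨hyS, hyp⟩
            rcases hyab y hyp with rfl | rfl
            · exfalso
              have h5 := (hmemS _ hap).1 hyS
              rw [hvara, hσv, hpola] at h5
              exact Bool.noConfusion h5
            · rfl
          · rintro rfl
            exact ⟨(hmemS _ hbp).2 (by rw [hvarb, hσv, hpolb]), hbp⟩
        rw [hSp, Finset.card_singleton]
    obtain ⟨e, heE, hesub⟩ := hwinS S hSsub hS1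
    have heE' : e ∈ E' := by
      rw [hE'def]
      refine Finset.mem_filter.2 ⟨heE, hesub.trans (Finset.insert_subset_insert _ hSsub), ?_⟩
      intro p hp
      have hv₀p : v₀ ∉ p := fun h => (Finset.mem_erase.1 ((hP p hp).2 h)).1 rfl
      have hsubSp : e ∩ p ⊆ S ∩ p := by
        intro y hy
        obtain ⟨hye, hyp⟩ := Finset.mem_inter.1 hy
        rcases Finset.mem_insert.1 (hesub hye) with rfl | hyS
        · exact absurd hyp hv₀p
        · exact Finset.mem_inter.2 ⟨hyS, hyp⟩
      calc (e ∩ p).card ≤ (S ∩ p).card := Finset.card_le_card hsubSp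
        _ = 1 := hS1 p hp
    obtain ⟨l, hlC, hlσ⟩ := hσ _ (hFmem' c e heE')
    simp only [ClD, Finset.mem_image] at hlC
    obtain ⟨v, hve, rfl⟩ := hlC
    simp only [litCD] at hlσ
    rcases Finset.mem_insert.1 (hesub hve) with hv0 | hvS
    · rw [varOfD, polOfD, if_pos hv0, if_pos hv0, ← hc] at hlσ
      simp at hlσ
    · have hsel := (Finset.mem_filter.1 hvS).2
      rw [hsel] at hlσ
      simp at hlσ
end

section
/- If there exists an unsatisfiable (k,s)-CNF formula, then there exists a (k,s)-hypergraph, i.e. a k-uniform hypergraph with maximum degree at most s on which Maker has a winning pairing strategy. -/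
open Finset

/-- Encode a literal as a natural number. -/
def encLit (l : Lit) : ℕ := 2 * l.1 + (if l.2 then 1 else 0)

lemma encLit_inj : Function.Injective encLit := by
  rintro ⟨x, b⟩ ⟨y, c⟩ h
  simp only [encLit] at h
  cases b <;> cases c <;> simp_all <;> omega

lemma encLit_surj : Function.Surjective encLit := by
  intro v
  refine ⟨(v / 2, decide (v % 2 = 1)), ?_⟩
  by_cases h : v % 2 = 1 <;> simp [encLit, h] <;> omega

/-- If there is an unsatisfiable `(k,s)`-CNF formula, then there is a `(k,s)`-hypergraph:
a `k`-uniform hypergraph with maximum degree at most `s` on which Maker has a winning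
pairing strategy. -/
theorem unsat_CNF_to_hypergraph (k s : ℕ) (F : CnfFormula) (hF : isKCNF F k)
    (hvar : ∀ x : ℕ, varOcc F x ≤ s) (hunsat : ¬ CnfSatisfiable F) :
    ∃ H : FinHypergraph ℕ, H.IsUniform k ∧
      (∀ v : ℕ, H.degree v ≤ s) ∧
      H.MakerPairingWin := by
  classical
  have hFne : F.Nonempty := by
    rcases F.eq_empty_or_nonempty with rfl | h
    · exact absurd ⟨fun _ => true, fun C hC => absurd hC (Finset.notMem_empty C)⟩ hunsat
    · exact h
  set vars : Finset ℕ := F.sup (fun C => C.image Prod.fst) with hvars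
  have hmemvars : ∀ C ∈ F, ∀ l ∈ C, l.1 ∈ vars := by
    intro C hC l hl
    exact Finset.mem_sup.2 ⟨C, hC, Finset.mem_image_of_mem _ hl⟩
  rcases vars.eq_empty_or_nonempty with hv | ⟨x₀, hx₀⟩
  · -- all clauses are empty, k = 0
    obtain ⟨C₀, hC₀⟩ := hFne
    have hC₀e : C₀ = ∅ := by
      rw [Finset.eq_empty_iff_forall_notMem]
      intro l hl
      have := hmemvars C₀ hC₀ l hl
      simp [hv] at this
    have hk0 : k = 0 := by
      have := (hF C₀ hC₀).1
      simpa [hC₀e] using this.symm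
    refine ⟨⟨{0}, {∅}⟩, ⟨?_, ?_⟩, ?_, ?_⟩
    · intro e he; simp at he; simp [he]
    · intro e he; simp at he; simp [he, hk0]
    · intro v
      simp only [FinHypergraph.degree, Finset.filter_singleton, Finset.notMem_empty, if_false]
      simp
    · refine ⟨0, by simp, ∅, by simp, by simp, by simp, ?_⟩
      intro S _ _
      exact ⟨∅, by simp, by simp⟩
  · -- main case
    rw [CnfSatisfiable] at hunsat
    push_neg at hunsat
    set H : FinHypergraph ℕ :=
      ⟨vars.biUnion (fun x => {encLit (x, true), encLit (x, false)}),
       F.image (fun C => C.image encLit)⟩ with hH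
    have hmemV : ∀ x ∈ vars, ∀ b : Bool, encLit (x, b) ∈ H.V := by
      intro x hx b
      refine Finset.mem_biUnion.2 ⟨x, hx, ?_⟩
      cases b <;> simp
    refine ⟨H, ⟨?_, ?_⟩, ?_, ?_⟩
    · -- edges ⊆ V
      intro e he
      simp only [hH, Finset.mem_image] at he
      obtain ⟨C, hC, rfl⟩ := he
      intro v hv'
      simp only [Finset.mem_image] at hv'
      obtain ⟨l, hl, rfl⟩ := hv'
      have := hmemV l.1 (hmemvars C hC l hl) l.2
      simpa using this
    · -- uniform
      intro e he
      simp only [hH, Finset.mem_image] at he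
      obtain ⟨C, hC, rfl⟩ := he
      rw [Finset.card_image_of_injective _ encLit_inj]
      exact (hF C hC).1
    · -- degree bound
      intro v
      obtain ⟨l, rfl⟩ := encLit_surj v
      have hsub : (H.E.filter fun e => encLit l ∈ e) ⊆
          ((F.filter fun C => l ∈ C).image (fun C => C.image encLit)) := by
        intro e he
        simp only [Finset.mem_filter, hH, Finset.mem_image] at he
        obtain ⟨⟨C, hC, rfl⟩, hmem⟩ := he
        simp only [Finset.mem_image] at hmem
        obtain ⟨l', hl', hll⟩ := hmem
        have : l' = l := encLit_inj hll
        subst this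
        exact Finset.mem_image.2 ⟨C, Finset.mem_filter.2 ⟨hC, hl'⟩, rfl⟩
      calc H.degree (encLit l) ≤ ((F.filter fun C => l ∈ C).image
              (fun C => C.image encLit)).card := Finset.card_le_card hsub
        _ ≤ (F.filter fun C => l ∈ C).card := Finset.card_image_le
        _ ≤ varOcc F l.1 := by
            apply Finset.card_le_card
            intro C hC
            rw [Finset.mem_filter] at hC ⊢
            exact ⟨hC.1, l.2, by rw [show (l.1, l.2) = l from rfl]; exact hC.2⟩
        _ ≤ s := hvar l.1
    · -- Maker pairing win
      set v₀ := encLit (x₀, true) with hv₀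
      set P : Finset (Finset ℕ) :=
        (vars.erase x₀).image (fun x => ({encLit (x, true), encLit (x, false)} : Finset ℕ))
        with hP
      have henc_ne : ∀ x y : ℕ, ∀ b c : Bool, x ≠ y → encLit (x, b) ≠ encLit (y, c) := by
        intro x y b c hxy h
        exact hxy (congrArg Prod.fst (encLit_inj h))
      refine ⟨v₀, hmemV x₀ hx₀ true, P, ?_, ?_, ?_, ?_⟩
      · -- pairs
        intro p hp
        simp only [hP, Finset.mem_image] at hp
        obtain ⟨x, hx, rfl⟩ := hp
        rw [Finset.mem_erase] at hx
        constructor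
        · rw [Finset.card_insert_of_notMem (by
            simp only [Finset.mem_singleton]
            intro h
            have := encLit_inj h
            simp at this), Finset.card_singleton]
        · intro y hy
          rw [Finset.mem_erase]
          simp only [Finset.mem_insert, Finset.mem_singleton] at hy
          rcases hy with rfl | rfl
          · exact ⟨henc_ne _ _ _ _ hx.1, hmemV x hx.2 true⟩
          · exact ⟨henc_ne _ _ _ _ hx.1, hmemV x hx.2 false⟩
      · -- disjoint
        intro p hp q hq hpq
        simp only [hP, Finset.mem_image] at hp hq
        obtain ⟨x, hx, rfl⟩ := hp
        obtain ⟨y, hy, rfl⟩ := hq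
        have hxy : x ≠ y := fun h => hpq (by rw [h])
        rw [Finset.disjoint_left]
        intro a ha ha'
        simp only [Finset.mem_insert, Finset.mem_singleton] at ha ha'
        rcases ha with rfl | rfl <;> rcases ha' with h | h <;>
          exact henc_ne _ _ _ _ hxy h
      · -- coverage
        have hsub : (H.V.erase v₀) \ P.sup id ⊆ {encLit (x₀, false)} := by
          intro y hy
          rw [Finset.mem_sdiff, Finset.mem_erase] at hy
          obtain ⟨⟨hyne, hyV⟩, hyP⟩ := hy
          simp only [hH, Finset.mem_biUnion, Finset.mem_insert, Finset.mem_singleton] at hyV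
          obtain ⟨x, hx, hxy⟩ := hyV
          by_cases hxx : x = x₀
          · subst hxx
            rcases hxy with rfl | rfl
            · exact absurd rfl hyne
            · exact Finset.mem_singleton_self _
          · exfalso
            apply hyP
            refine Finset.mem_sup.2 ⟨{encLit (x, true), encLit (x, false)}, ?_, ?_⟩
            · exact Finset.mem_image.2 ⟨x, Finset.mem_erase.2 ⟨hxx, hx⟩, rfl⟩
            · simp only [id, Finset.mem_insert, Finset.mem_singleton]
              tauto
        calc ((H.V.erase v₀) \ P.sup id).card ≤ ({encLit (x₀, false)} : Finset ℕ).card :=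
              Finset.card_le_card hsub
          _ = 1 := Finset.card_singleton _
      · -- winning condition
        intro S _hS hone
        set τ : ℕ → Bool := fun x =>
          if x = x₀ then false else !(decide (encLit (x, true) ∈ S)) with hτ
        obtain ⟨C, hC, hfalse⟩ := hunsat τ
        refine ⟨C.image encLit, Finset.mem_image.2 ⟨C, hC, rfl⟩, ?_⟩
        intro y hy
        simp only [Finset.mem_image] at hy
        obtain ⟨l, hl, rfl⟩ := hy
        have hne := hfalse l hl
        rw [show l = (l.1, l.2) from rfl]
        by_cases hx : l.1 = x₀
        · have : l.2 = true := by
            simp only [hτ, hx, if_pos rfl] at hne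
            cases h : l.2
            · exact absurd h.symm hne
            · rfl
          rw [hx, this]
          exact Finset.mem_insert_self _ _
        · have hlv : l.1 ∈ vars := hmemvars C hC l hl
          have hpP : ({encLit (l.1, true), encLit (l.1, false)} : Finset ℕ) ∈ P :=
            Finset.mem_image.2 ⟨l.1, Finset.mem_erase.2 ⟨hx, hlv⟩, rfl⟩
          have hcard := hone _ hpP
          have hex : ∃ a ∈ S, a ∈ ({encLit (l.1, true), encLit (l.1, false)} : Finset ℕ) := by
            have hne' : (S ∩ {encLit (l.1, true), encLit (l.1, false)}).Nonempty := by
              rw [← Finset.card_pos, hcard]; norm_num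
            obtain ⟨a, ha⟩ := hne'
            rw [Finset.mem_inter] at ha
            exact ⟨a, ha.1, ha.2⟩
          simp only [hτ, if_neg hx] at hne
          apply Finset.mem_insert_of_mem
          cases hb : l.2
          · -- τ l.1 ≠ false, so τ l.1 = true, so encLit (l.1, true) ∉ S
            rw [hb] at hne
            have hnotin : encLit (l.1, true) ∉ S := by
              intro hin
              apply hne
              simp [hin]
            obtain ⟨a, haS, hap⟩ := hex
            simp only [Finset.mem_insert, Finset.mem_singleton] at hap
            rcases hap with rfl | rfl
            · exact absurd haS hnotin
            · exact haS
          · rw [hb] at hne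
            by_contra hnotin
            apply hne
            simp [hnotin]
end

section
/- For every integer k ≥ 3 there exists an unsatisfiable CNF formula in which every clause contains exactly k literals and whose maximum neighborhood size is at most 2^(k-1) + 2^(k-2) + 1. Consequently l(k) ≤ 2^(k-1) + 2^(k-2) for every k ≥ 3, where l(k) is the largest integer m such that every k-CNF formula with maximum neighborhood size at most m is satisfiable. -/
open Finset

namespace NbhdCons

noncomputable def enc {n : ℕ} (a : Fin n → Bool) : ℕ :=
  ((Fintype.equivFin (Fin n → Bool)) a : ℕ)

lemma enc_injective {n : ℕ} : Function.Injective (@enc n) := by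
  intro a b h
  exact (Fintype.equivFin (Fin n → Bool)).injective (Fin.val_injective h)

@[simp] lemma enc_inj_iff {n : ℕ} {a b : Fin n → Bool} : enc a = enc b ↔ a = b :=
  enc_injective.eq_iff

def zV (j : ℕ) : ℕ := Nat.pair 0 j
noncomputable def vV {n : ℕ} (a : Fin n → Bool) : ℕ := Nat.pair 1 (enc a)
noncomputable def yV {n : ℕ} (a : Fin n → Bool) : ℕ := Nat.pair 2 (enc a)
noncomputable def pV {n : ℕ} (a : Fin n → Bool) (j : ℕ) : ℕ := Nat.pair 3 (Nat.pair (enc a) j)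
noncomputable def qV {n : ℕ} (a : Fin n → Bool) (j : ℕ) : ℕ := Nat.pair 4 (Nat.pair (enc a) j)

section VarLemmas

variable {n m : ℕ} {a : Fin n → Bool} {b : Fin m → Bool} {i j : ℕ}

@[simp] lemma zV_inj : zV i = zV j ↔ i = j := by simp [zV, Nat.pair_eq_pair]
@[simp] lemma vV_inj {a b : Fin n → Bool} : vV a = vV b ↔ a = b := by
  simp [vV, Nat.pair_eq_pair]
@[simp] lemma yV_inj {a b : Fin n → Bool} : yV a = yV b ↔ a = b := by
  simp [yV, Nat.pair_eq_pair]
@[simp] lemma pV_inj {a b : Fin n → Bool} : pV a i = pV b j ↔ a = b ∧ i = j := by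
  simp [pV, Nat.pair_eq_pair]
@[simp] lemma qV_inj {a b : Fin n → Bool} : qV a i = qV b j ↔ a = b ∧ i = j := by
  simp [qV, Nat.pair_eq_pair]

@[simp] lemma zV_ne_vV : zV i ≠ vV a := by simp [zV, vV, Nat.pair_eq_pair]
@[simp] lemma zV_ne_yV : zV i ≠ yV a := by simp [zV, yV, Nat.pair_eq_pair]
@[simp] lemma zV_ne_pV : zV i ≠ pV a j := by simp [zV, pV, Nat.pair_eq_pair]
@[simp] lemma zV_ne_qV : zV i ≠ qV a j := by simp [zV, qV, Nat.pair_eq_pair]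
@[simp] lemma vV_ne_zV : vV a ≠ zV i := by simp [zV, vV, Nat.pair_eq_pair]
@[simp] lemma vV_ne_yV : vV a ≠ yV b := by simp [vV, yV, Nat.pair_eq_pair]
@[simp] lemma vV_ne_pV : vV a ≠ pV b j := by simp [vV, pV, Nat.pair_eq_pair]
@[simp] lemma vV_ne_qV : vV a ≠ qV b j := by simp [vV, qV, Nat.pair_eq_pair]
@[simp] lemma yV_ne_zV : yV a ≠ zV i := by simp [zV, yV, Nat.pair_eq_pair]
@[simp] lemma yV_ne_vV : yV a ≠ vV b := by simp [yV, vV, Nat.pair_eq_pair]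
@[simp] lemma yV_ne_pV : yV a ≠ pV b j := by simp [yV, pV, Nat.pair_eq_pair]
@[simp] lemma yV_ne_qV : yV a ≠ qV b j := by simp [yV, qV, Nat.pair_eq_pair]
@[simp] lemma pV_ne_zV : pV a i ≠ zV j := by simp [zV, pV, Nat.pair_eq_pair]
@[simp] lemma pV_ne_vV : pV a i ≠ vV b := by simp [pV, vV, Nat.pair_eq_pair]
@[simp] lemma pV_ne_yV : pV a i ≠ yV b := by simp [pV, yV, Nat.pair_eq_pair]
@[simp] lemma pV_ne_qV : pV a i ≠ qV b j := by simp [pV, qV, Nat.pair_eq_pair]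
@[simp] lemma qV_ne_zV : qV a i ≠ zV j := by simp [zV, qV, Nat.pair_eq_pair]
@[simp] lemma qV_ne_vV : qV a i ≠ vV b := by simp [qV, vV, Nat.pair_eq_pair]
@[simp] lemma qV_ne_yV : qV a i ≠ yV b := by simp [qV, yV, Nat.pair_eq_pair]
@[simp] lemma qV_ne_pV : qV a i ≠ pV b j := by simp [qV, pV, Nat.pair_eq_pair]

end VarLemmas

variable {n1 n2 : ℕ}

noncomputable def Gcl (a ε : Fin n1 → Bool) : Clause :=
  insert (vV a, true) ((univ : Finset (Fin n1)).image fun j : Fin n1 => (pV a (j : ℕ), ε j))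

noncomputable def Acl (a : Fin n1 → Bool) (δ : Fin n2 → Bool) : Clause :=
  insert (vV a, false) (insert (yV a, false)
    ((univ : Finset (Fin n2)).image fun j : Fin n2 => (qV a (j : ℕ), δ j)))

noncomputable def Wcl (a : Fin n1 → Bool) : Clause :=
  insert (yV a, true) ((univ : Finset (Fin n1)).image fun j : Fin n1 => (zV (j : ℕ), !(a j)))

noncomputable def FC (n1 n2 : ℕ) : CnfFormula :=
  (Finset.image₂ Gcl (univ : Finset (Fin n1 → Bool)) (univ : Finset (Fin n1 → Bool))) ∪
  (Finset.image₂ Acl (univ : Finset (Fin n1 → Bool)) (univ : Finset (Fin n2 → Bool))) ∪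
  ((univ : Finset (Fin n1 → Bool)).image Wcl)

lemma mem_Gcl {a ε : Fin n1 → Bool} {l : Lit} :
    l ∈ Gcl a ε ↔ l = (vV a, true) ∨ ∃ j : Fin n1, l = (pV a (j : ℕ), ε j) := by
  simp only [Gcl, mem_insert, mem_image, mem_univ, true_and]
  constructor
  · rintro (h | ⟨j, h⟩)
    · exact Or.inl h
    · exact Or.inr ⟨j, h.symm⟩
  · rintro (h | ⟨j, h⟩)
    · exact Or.inl h
    · exact Or.inr ⟨j, h.symm⟩

lemma mem_Acl {a : Fin n1 → Bool} {δ : Fin n2 → Bool} {l : Lit} :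
    l ∈ Acl a δ ↔ l = (vV a, false) ∨ l = (yV a, false) ∨
      ∃ j : Fin n2, l = (qV a (j : ℕ), δ j) := by
  simp only [Acl, mem_insert, mem_image, mem_univ, true_and]
  constructor
  · rintro (h | h | ⟨j, h⟩)
    · exact Or.inl h
    · exact Or.inr (Or.inl h)
    · exact Or.inr (Or.inr ⟨j, h.symm⟩)
  · rintro (h | h | ⟨j, h⟩)
    · exact Or.inl h
    · exact Or.inr (Or.inl h)
    · exact Or.inr (Or.inr ⟨j, h.symm⟩)

lemma mem_Wcl {a : Fin n1 → Bool} {l : Lit} :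
    l ∈ Wcl a ↔ l = (yV a, true) ∨ ∃ j : Fin n1, l = (zV (j : ℕ), !(a j)) := by
  simp only [Wcl, mem_insert, mem_image, mem_univ, true_and]
  constructor
  · rintro (h | ⟨j, h⟩)
    · exact Or.inl h
    · exact Or.inr ⟨j, h.symm⟩
  · rintro (h | ⟨j, h⟩)
    · exact Or.inl h
    · exact Or.inr ⟨j, h.symm⟩

lemma mem_FC {C : Clause} :
    C ∈ FC n1 n2 ↔ (∃ a ε : Fin n1 → Bool, C = Gcl a ε) ∨ (∃ (a : Fin n1 → Bool) (δ : Fin n2 → Bool), C = Acl a δ) ∨ (∃ a : Fin n1 → Bool, C = Wcl (n1 := n1) a) := by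
  simp only [FC, mem_union, Finset.mem_image₂, Finset.mem_image, mem_univ, true_and]
  constructor
  · rintro ((⟨a, ε, h⟩ | ⟨a, δ, h⟩) | ⟨a, h⟩)
    · exact Or.inl ⟨a, ε, h.symm⟩
    · exact Or.inr (Or.inl ⟨a, δ, h.symm⟩)
    · exact Or.inr (Or.inr ⟨a, h.symm⟩)
  · rintro (⟨a, ε, h⟩ | ⟨a, δ, h⟩ | ⟨a, h⟩)
    · exact Or.inl (Or.inl ⟨a, ε, h.symm⟩)
    · exact Or.inl (Or.inr ⟨a, δ, h.symm⟩)
    · exact Or.inr ⟨a, h.symm⟩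

lemma Gcl_mem {a ε : Fin n1 → Bool} : Gcl a ε ∈ FC n1 n2 :=
  mem_FC.mpr (Or.inl ⟨a, ε, rfl⟩)

lemma Acl_mem {a : Fin n1 → Bool} {δ : Fin n2 → Bool} : Acl a δ ∈ FC n1 n2 :=
  mem_FC.mpr (Or.inr (Or.inl ⟨a, δ, rfl⟩))

lemma Wcl_mem {a : Fin n1 → Bool} : Wcl a ∈ FC n1 n2 :=
  mem_FC.mpr (Or.inr (Or.inr ⟨a, rfl⟩))

lemma card_univ_bool (n : ℕ) : ((univ : Finset (Fin n → Bool))).card = 2 ^ n := by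
  rw [card_univ, Fintype.card_fun, Fintype.card_bool, Fintype.card_fin]

lemma pInj (a ε : Fin n1 → Bool) :
    Function.Injective (fun j : Fin n1 => ((pV a (j : ℕ) : ℕ), ε j)) := by
  intro i j h
  have h1 : (pV a (i : ℕ) : ℕ) = pV a (j : ℕ) := congrArg Prod.fst h
  rw [pV_inj] at h1
  exact Fin.val_injective h1.2

lemma qInj (a : Fin n1 → Bool) (δ : Fin n2 → Bool) :
    Function.Injective (fun j : Fin n2 => ((qV a (j : ℕ) : ℕ), δ j)) := by
  intro i j h
  have h1 : (qV a (i : ℕ) : ℕ) = qV a (j : ℕ) := congrArg Prod.fst h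
  rw [qV_inj] at h1
  exact Fin.val_injective h1.2

lemma zInj (a : Fin n1 → Bool) :
    Function.Injective (fun j : Fin n1 => ((zV (j : ℕ) : ℕ), !(a j))) := by
  intro i j h
  have h1 : (zV (i : ℕ) : ℕ) = zV (j : ℕ) := congrArg Prod.fst h
  rw [zV_inj] at h1
  exact Fin.val_injective h1

lemma card_Gcl (a ε : Fin n1 → Bool) : (Gcl a ε).card = n1 + 1 := by
  rw [Gcl, card_insert_of_notMem, Finset.card_image_of_injective _ (pInj a ε),
    card_univ, Fintype.card_fin]
  simp [Prod.ext_iff]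

lemma card_Acl (a : Fin n1 → Bool) (δ : Fin n2 → Bool) : (Acl a δ).card = n2 + 2 := by
  rw [Acl, card_insert_of_notMem, card_insert_of_notMem,
    Finset.card_image_of_injective _ (qInj a δ), card_univ, Fintype.card_fin]
  · simp [Prod.ext_iff]
  · simp [Prod.ext_iff]

lemma card_Wcl (a : Fin n1 → Bool) : (Wcl a).card = n1 + 1 := by
  rw [Wcl, card_insert_of_notMem, Finset.card_image_of_injective _ (zInj a),
    card_univ, Fintype.card_fin]
  simp [Prod.ext_iff]

lemma distinct_Gcl (a ε : Fin n1 → Bool) : distinctVars (Gcl a ε) := by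
  intro l hl l' hl' h1
  rw [mem_Gcl] at hl hl'
  rcases hl with rfl | ⟨j, rfl⟩ <;> rcases hl' with rfl | ⟨j', rfl⟩ <;> simp_all [Fin.val_inj]

lemma distinct_Acl (a : Fin n1 → Bool) (δ : Fin n2 → Bool) : distinctVars (Acl a δ) := by
  intro l hl l' hl' h1
  rw [mem_Acl] at hl hl'
  rcases hl with rfl | rfl | ⟨j, rfl⟩ <;> rcases hl' with rfl | rfl | ⟨j', rfl⟩ <;>
    simp_all [Fin.val_inj]

lemma distinct_Wcl (a : Fin n1 → Bool) : distinctVars (Wcl a) := by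
  intro l hl l' hl' h1
  rw [mem_Wcl] at hl hl'
  rcases hl with rfl | ⟨j, rfl⟩ <;> rcases hl' with rfl | ⟨j', rfl⟩ <;> simp_all [Fin.val_inj]

lemma FC_unsat : ¬ CnfSatisfiable (FC n1 n2) := by
  rintro ⟨σ, hσ⟩
  have hv : ∀ a : Fin n1 → Bool, σ (vV a) = true := by
    intro a
    by_contra hva
    obtain ⟨l, hl, hls⟩ := hσ (Gcl a (fun j => !σ (pV a (j : ℕ)))) Gcl_mem
    rw [mem_Gcl] at hl
    rcases hl with rfl | ⟨j, rfl⟩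
    · exact hva hls
    · simp at hls
  have hy : ∀ a : Fin n1 → Bool, σ (yV a) = false := by
    intro a
    by_contra hya
    obtain ⟨l, hl, hls⟩ := hσ (Acl a (fun j : Fin n2 => !σ (qV a (j : ℕ)))) Acl_mem
    rw [mem_Acl] at hl
    rcases hl with rfl | rfl | ⟨j, rfl⟩
    · rw [hv a] at hls; simp at hls
    · exact hya hls
    · simp at hls
  obtain ⟨l, hl, hls⟩ := hσ (Wcl (fun j : Fin n1 => σ (zV (j : ℕ)))) Wcl_mem
  rw [mem_Wcl] at hl
  rcases hl with rfl | ⟨j, rfl⟩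
  · rw [hy] at hls; simp at hls
  · simp at hls

lemma var_Gcl {a ε : Fin n1 → Bool} {x : ℕ} {c : Bool} (h : (x, c) ∈ Gcl a ε) :
    x = vV a ∨ ∃ j : Fin n1, x = pV a (j : ℕ) := by
  rw [mem_Gcl] at h
  rcases h with h | ⟨j, h⟩
  · exact Or.inl (congrArg Prod.fst h)
  · exact Or.inr ⟨j, congrArg Prod.fst h⟩

lemma var_Acl {a : Fin n1 → Bool} {δ : Fin n2 → Bool} {x : ℕ} {c : Bool}
    (h : (x, c) ∈ Acl a δ) :
    x = vV a ∨ x = yV a ∨ ∃ j : Fin n2, x = qV a (j : ℕ) := by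
  rw [mem_Acl] at h
  rcases h with h | h | ⟨j, h⟩
  · exact Or.inl (congrArg Prod.fst h)
  · exact Or.inr (Or.inl (congrArg Prod.fst h))
  · exact Or.inr (Or.inr ⟨j, congrArg Prod.fst h⟩)

lemma var_Wcl {a : Fin n1 → Bool} {x : ℕ} {c : Bool} (h : (x, c) ∈ Wcl a) :
    x = yV a ∨ ∃ j : Fin n1, x = zV (j : ℕ) := by
  rw [mem_Wcl] at h
  rcases h with h | ⟨j, h⟩
  · exact Or.inl (congrArg Prod.fst h)
  · exact Or.inr ⟨j, congrArg Prod.fst h⟩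

lemma nbhd_Gcl (a ε : Fin n1 → Bool) :
    clauseNbhd (FC n1 n2) (Gcl a ε) ≤ 2 ^ n1 + 2 ^ n2 := by
  classical
  have hsub : (FC n1 n2).filter
      (fun D => D ≠ Gcl a ε ∧ ∃ l ∈ Gcl a ε, ∃ b : Bool, (l.1, b) ∈ D) ⊆
      ((univ : Finset (Fin n1 → Bool)).image (Gcl a) ∪
        (univ : Finset (Fin n2 → Bool)).image (Acl a)) := by
    intro D hD
    rw [mem_filter] at hD
    obtain ⟨hDF, -, l, hlC, b, hbD⟩ := hD
    obtain ⟨x, c⟩ := l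
    rw [mem_FC] at hDF
    rcases hDF with ⟨a', ε', rfl⟩ | ⟨a', δ', rfl⟩ | ⟨a', rfl⟩
    · have haa : a' = a := by
        rcases var_Gcl hlC with hx | ⟨j, hx⟩ <;> rcases var_Gcl hbD with hx' | ⟨j', hx'⟩ <;>
          rw [hx] at hx' <;> simp_all
      subst haa
      exact mem_union_left _ (mem_image_of_mem _ (mem_univ _))
    · have haa : a' = a := by
        rcases var_Gcl hlC with hx | ⟨j, hx⟩ <;>
          rcases var_Acl hbD with hx' | hx' | ⟨j', hx'⟩ <;>
          rw [hx] at hx' <;> simp_all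
      subst haa
      exact mem_union_right _ (mem_image_of_mem _ (mem_univ _))
    · exfalso
      rcases var_Gcl hlC with hx | ⟨j, hx⟩ <;> rcases var_Wcl hbD with hx' | ⟨j', hx'⟩ <;>
        rw [hx] at hx' <;> simp_all
  refine le_trans (card_le_card hsub) ?_
  refine le_trans (card_union_le _ _) ?_
  have h1 : ((univ : Finset (Fin n1 → Bool)).image (Gcl a)).card ≤ 2 ^ n1 :=
    le_trans card_image_le (le_of_eq (card_univ_bool n1))
  have h2 : ((univ : Finset (Fin n2 → Bool)).image (Acl a)).card ≤ 2 ^ n2 :=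
    le_trans card_image_le (le_of_eq (card_univ_bool n2))
  exact add_le_add h1 h2

lemma nbhd_Acl (a : Fin n1 → Bool) (δ : Fin n2 → Bool) :
    clauseNbhd (FC n1 n2) (Acl a δ) ≤ 2 ^ n1 + 2 ^ n2 + 1 := by
  classical
  have hsub : (FC n1 n2).filter
      (fun D => D ≠ Acl a δ ∧ ∃ l ∈ Acl a δ, ∃ b : Bool, (l.1, b) ∈ D) ⊆
      (((univ : Finset (Fin n1 → Bool)).image (Gcl a) ∪
        (univ : Finset (Fin n2 → Bool)).image (Acl a)) ∪ {Wcl a}) := by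
    intro D hD
    rw [mem_filter] at hD
    obtain ⟨hDF, -, l, hlC, b, hbD⟩ := hD
    obtain ⟨x, c⟩ := l
    rw [mem_FC] at hDF
    rcases hDF with ⟨a', ε', rfl⟩ | ⟨a', δ', rfl⟩ | ⟨a', rfl⟩
    · have haa : a' = a := by
        rcases var_Acl hlC with hx | hx | ⟨j, hx⟩ <;>
          rcases var_Gcl hbD with hx' | ⟨j', hx'⟩ <;>
          rw [hx] at hx' <;> simp_all
      subst haa
      exact mem_union_left _ (mem_union_left _ (mem_image_of_mem _ (mem_univ _)))
    · have haa : a' = a := by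
        rcases var_Acl hlC with hx | hx | ⟨j, hx⟩ <;>
          rcases var_Acl hbD with hx' | hx' | ⟨j', hx'⟩ <;>
          rw [hx] at hx' <;> simp_all
      subst haa
      exact mem_union_left _ (mem_union_right _ (mem_image_of_mem _ (mem_univ _)))
    · have haa : a' = a := by
        rcases var_Acl hlC with hx | hx | ⟨j, hx⟩ <;>
          rcases var_Wcl hbD with hx' | ⟨j', hx'⟩ <;>
          rw [hx] at hx' <;> simp_all
      subst haa
      exact mem_union_right _ (mem_singleton_self _)
  refine le_trans (card_le_card hsub) ?_
  refine le_trans (card_union_le _ _) ?_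
  have h1 : ((univ : Finset (Fin n1 → Bool)).image (Gcl a)).card ≤ 2 ^ n1 :=
    le_trans card_image_le (le_of_eq (card_univ_bool n1))
  have h2 : ((univ : Finset (Fin n2 → Bool)).image (Acl a)).card ≤ 2 ^ n2 :=
    le_trans card_image_le (le_of_eq (card_univ_bool n2))
  have h3 : ((univ : Finset (Fin n1 → Bool)).image (Gcl a) ∪
      (univ : Finset (Fin n2 → Bool)).image (Acl a)).card ≤ 2 ^ n1 + 2 ^ n2 :=
    le_trans (card_union_le _ _) (add_le_add h1 h2)
  simpa using add_le_add h3 (le_refl 1)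

lemma nbhd_Wcl (a : Fin n1 → Bool) :
    clauseNbhd (FC n1 n2) (Wcl a) ≤ 2 ^ n1 + 2 ^ n2 := by
  classical
  have hsub : (FC n1 n2).filter
      (fun D => D ≠ Wcl a ∧ ∃ l ∈ Wcl a, ∃ b : Bool, (l.1, b) ∈ D) ⊆
      ((univ : Finset (Fin n1 → Bool)).image Wcl ∪
        (univ : Finset (Fin n2 → Bool)).image (Acl a)) := by
    intro D hD
    rw [mem_filter] at hD
    obtain ⟨hDF, -, l, hlC, b, hbD⟩ := hD
    obtain ⟨x, c⟩ := l
    rw [mem_FC] at hDF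
    rcases hDF with ⟨a', ε', rfl⟩ | ⟨a', δ', rfl⟩ | ⟨a', rfl⟩
    · exfalso
      rcases var_Wcl hlC with hx | ⟨j, hx⟩ <;> rcases var_Gcl hbD with hx' | ⟨j', hx'⟩ <;>
        rw [hx] at hx' <;> simp_all
    · have haa : a' = a := by
        rcases var_Wcl hlC with hx | ⟨j, hx⟩ <;>
          rcases var_Acl hbD with hx' | hx' | ⟨j', hx'⟩ <;>
          rw [hx] at hx' <;> simp_all
      subst haa
      exact mem_union_right _ (mem_image_of_mem _ (mem_univ _))
    · exact mem_union_left _ (mem_image_of_mem _ (mem_univ _))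
  refine le_trans (card_le_card hsub) ?_
  refine le_trans (card_union_le _ _) ?_
  have h1 : ((univ : Finset (Fin n1 → Bool)).image Wcl).card ≤ 2 ^ n1 :=
    le_trans card_image_le (le_of_eq (card_univ_bool n1))
  have h2 : ((univ : Finset (Fin n2 → Bool)).image (Acl a)).card ≤ 2 ^ n2 :=
    le_trans card_image_le (le_of_eq (card_univ_bool n2))
  exact add_le_add h1 h2

end NbhdCons

/-- For every `k ≥ 3` there is an unsatisfiable `k`-CNF formula with maximum neighborhood
size at most `2^(k-1) + 2^(k-2) + 1`. Consequently `l(k) ≤ 2^(k-1) + 2^(k-2)` for `k ≥ 3`. -/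
theorem unsat_kCNF_neighborhood_three_halves (k : ℕ) (hk : 3 ≤ k) :
    ∃ F : CnfFormula, isKCNF F k ∧
      (∀ C ∈ F, clauseNbhd F C ≤ 2 ^ (k - 1) + 2 ^ (k - 2) + 1) ∧
      ¬ CnfSatisfiable F := by
  classical
  refine ⟨NbhdCons.FC (k-1) (k-2), ?_, ?_, NbhdCons.FC_unsat⟩
  · intro C hC
    rw [NbhdCons.mem_FC] at hC
    have e1 : k - 1 + 1 = k := by omega
    have e2 : k - 2 + 2 = k := by omega
    rcases hC with ⟨a, ε, rfl⟩ | ⟨a, δ, rfl⟩ | ⟨a, rfl⟩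
    · exact ⟨by rw [NbhdCons.card_Gcl, e1], NbhdCons.distinct_Gcl a ε⟩
    · exact ⟨by rw [NbhdCons.card_Acl, e2], NbhdCons.distinct_Acl a δ⟩
    · exact ⟨by rw [NbhdCons.card_Wcl, e1], NbhdCons.distinct_Wcl a⟩
  · intro C hC
    rw [NbhdCons.mem_FC] at hC
    rcases hC with ⟨a, ε, rfl⟩ | ⟨a, δ, rfl⟩ | ⟨a, rfl⟩
    · exact le_trans (NbhdCons.nbhd_Gcl a ε) (by omega)
    · exact NbhdCons.nbhd_Acl a δ
    · exact le_trans (NbhdCons.nbhd_Wcl a) (by omega)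
end

section
/- Let n ≥ 1 and let T be a binary tree in which every leaf has depth at least n − 1. Then Maker has a winning pairing strategy on the n-uniform hypergraph H_T. -/
open Finset

/-- A binary tree: a nonempty, prefix-closed finite set of binary strings in which
every node has either both children or none. -/
def IsBinaryTree (T : Finset (List Bool)) : Prop :=
  T.Nonempty ∧
  (∀ t ∈ T, ∀ s : List Bool, s <+: t → s ∈ T) ∧
  (∀ t ∈ T, (t ++ [false] ∈ T ↔ t ++ [true] ∈ T))

/-- A leaf of the tree `T`: a node with no children. -/
def IsTreeLeaf (T : Finset (List Bool)) (t : List Bool) : Prop :=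
  t ∈ T ∧ t ++ [false] ∉ T ∧ t ++ [true] ∉ T

instance (T : Finset (List Bool)) (t : List Bool) : Decidable (IsTreeLeaf T t) :=
  decidable_of_iff (t ∈ T ∧ t ++ [false] ∉ T ∧ t ++ [true] ∉ T) Iff.rfl

/-- The hyperedges of `H_T`: for each leaf `t` of depth at least `n - 1`, the set of the
`n` nodes on the path of length `n - 1` ending at `t`. -/
def treeEdges (T : Finset (List Bool)) (n : ℕ) : Finset (Finset (List Bool)) :=
  (T.filter fun t => IsTreeLeaf T t ∧ n - 1 ≤ t.length).image
    fun t => (Finset.range n).image fun i => t.take (t.length - i)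

/-- The `n`-uniform hypergraph `H_T` associated with a binary tree `T`. -/
def treeHypergraph (T : Finset (List Bool)) (n : ℕ) : FinHypergraph (List Bool) :=
  ⟨T, treeEdges T n⟩

-- auxiliary lemmas
lemma prefix_snoc_cases {p t : List Bool} {b : Bool} (h : p <+: t ++ [b]) :
    p <+: t ∨ p = t ++ [b] := by
  rcases Nat.lt_or_ge p.length (t ++ [b]).length with hlt | hge
  · left
    have : p.length ≤ t.length := by simpa using Nat.lt_succ_iff.mp (by simpa using hlt)
    exact List.prefix_of_prefix_length_le h (t.prefix_append [b]) this
  · right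
    have hle := h.length_le
    exact List.IsPrefix.eq_of_length h (le_antisymm hle hge)

/-- If every leaf of a binary tree `T` has depth at least `n - 1`, then Maker has a
winning pairing strategy on the `n`-uniform hypergraph `H_T`. -/
theorem maker_wins_on_tree_hypergraph (n : ℕ) (hn : 1 ≤ n) (T : Finset (List Bool))
    (hT : IsBinaryTree T)
    (hleaf : ∀ t : List Bool, IsTreeLeaf T t → n - 1 ≤ t.length) :
    (treeHypergraph T n).MakerPairingWin := by
  classical
  obtain ⟨hne, hpref, hiff⟩ := hT
  have hroot : ([] : List Bool) ∈ T := by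
    obtain ⟨t, ht⟩ := hne
    exact hpref t ht [] List.nil_prefix
  -- internal nodes have both children
  have hboth : ∀ t ∈ T, ¬ IsTreeLeaf T t → (t ++ [false] ∈ T ∧ t ++ [true] ∈ T) := by
    intro t ht hnl
    by_cases hf : t ++ [false] ∈ T
    · exact ⟨hf, (hiff t ht).mp hf⟩
    · by_cases htr : t ++ [true] ∈ T
      · exact ⟨(hiff t ht).mpr htr, htr⟩
      · exact absurd ⟨ht, hf, htr⟩ hnl
  set P : Finset (Finset (List Bool)) :=
    (T.filter fun t => t ++ [false] ∈ T).image
      (fun t => ({t ++ [false], t ++ [true]} : Finset (List Bool))) with hP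
  have hsnoc_ne : ∀ (t : List Bool) (b : Bool), t ++ [b] ≠ [] := by
    intro t b h; simpa using congrArg List.length h
  have hne_ft : ∀ t : List Bool, t ++ [false] ≠ t ++ [true] := by
    intro t h
    have := List.append_cancel_left h
    simp at this
  have hmemP : ∀ t ∈ T, t ++ [false] ∈ T →
      ({t ++ [false], t ++ [true]} : Finset (List Bool)) ∈ P := by
    intro t ht hf
    exact Finset.mem_image_of_mem _ (Finset.mem_filter.mpr ⟨ht, hf⟩)
  refine ⟨[], hroot, P, ?_, ?_, ?_, ?_⟩
  · -- each pair has card 2 and lies in T.erase []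
    intro p hp
    obtain ⟨t, htmem, rfl⟩ := Finset.mem_image.mp hp
    obtain ⟨ht, hf⟩ := Finset.mem_filter.mp htmem
    have ht' : t ++ [true] ∈ T := (hiff t ht).mp hf
    constructor
    · rw [Finset.card_insert_of_notMem (by simp [hne_ft t]), Finset.card_singleton]
    · intro x hx
      rcases Finset.mem_insert.mp hx with rfl | hx
      · exact Finset.mem_erase.mpr ⟨hsnoc_ne t false, hf⟩
      · rw [Finset.mem_singleton] at hx; subst hx
        exact Finset.mem_erase.mpr ⟨hsnoc_ne t true, ht'⟩
  · -- pairwise disjoint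
    intro p hp q hq hpq
    obtain ⟨t, htmem, rfl⟩ := Finset.mem_image.mp hp
    obtain ⟨s, hsmem, rfl⟩ := Finset.mem_image.mp hq
    rw [Finset.disjoint_left]
    intro x hx hx'
    have hts : t = s := by
      have h1 : ∃ b : Bool, x = t ++ [b] := by
        rcases Finset.mem_insert.mp hx with rfl | h
        · exact ⟨false, rfl⟩
        · exact ⟨true, Finset.mem_singleton.mp h⟩
      have h2 : ∃ b : Bool, x = s ++ [b] := by
        rcases Finset.mem_insert.mp hx' with rfl | h
        · exact ⟨false, rfl⟩
        · exact ⟨true, Finset.mem_singleton.mp h⟩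
      obtain ⟨b1, rfl⟩ := h1
      obtain ⟨b2, he⟩ := h2
      have := congrArg List.dropLast he
      simpa using this
    exact hpq (by rw [hts])
  · -- coverage
    have hempty : (T.erase [] \ P.sup id) = ∅ := by
      rw [Finset.sdiff_eq_empty_iff_subset]
      intro x hx
      obtain ⟨hxne, hxT⟩ := Finset.mem_erase.mp hx
      set t := x.dropLast with hdef
      have hxeq : t ++ [x.getLast hxne] = x := List.dropLast_append_getLast hxne
      have htT : t ∈ T := hpref x hxT t (by rw [← hxeq]; exact t.prefix_append _)
      have hchild : t ++ [false] ∈ T := by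
        cases hb : x.getLast hxne with
        | false => rw [← hxeq, hb] at hxT; exact hxT
        | true => exact (hiff t htT).mpr (by rw [← hxeq, hb] at hxT; exact hxT)
      have hpair := hmemP t htT hchild
      have hxp : x ∈ ({t ++ [false], t ++ [true]} : Finset (List Bool)) := by
        rw [← hxeq]
        cases x.getLast hxne <;> simp
      exact Finset.mem_sup.mpr ⟨_, hpair, hxp⟩
    show (T.erase [] \ P.sup id).card ≤ 1
    rw [hempty]; simp
  · -- winning condition
    intro S _ hSsel
    -- build a leaf all of whose nonempty prefixes are in S
    have key : ∀ k : ℕ, ∀ t ∈ T, T.sup List.length - t.length ≤ k →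
        (∀ p : List Bool, p <+: t → p ≠ [] → p ∈ S) →
        ∃ ℓ, IsTreeLeaf T ℓ ∧ (∀ p : List Bool, p <+: ℓ → p ≠ [] → p ∈ S) := by
      intro k
      induction k with
      | zero =>
        intro t ht hk hpS
        refine ⟨t, ?_, hpS⟩
        by_contra hnl
        have hc := (hboth t ht hnl).1
        have hlen : t.length + 1 ≤ T.sup List.length := by
          simpa using Finset.le_sup (f := List.length) hc
        omega
      | succ k ih =>
        intro t ht hk hpS
        by_cases hl : IsTreeLeaf T t
        · exact ⟨t, hl, hpS⟩
        · obtain ⟨hf, htr⟩ := hboth t ht hl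
          have hpair := hmemP t ht hf
          obtain ⟨x, hx⟩ := Finset.card_eq_one.mp (hSsel _ hpair)
          have hxmem : x ∈ S ∩ ({t ++ [false], t ++ [true]} : Finset (List Bool)) := by
            rw [hx]; exact Finset.mem_singleton_self x
          rw [Finset.mem_inter] at hxmem
          obtain ⟨hxS, hxp⟩ := hxmem
          have hexb : ∃ b : Bool, x = t ++ [b] ∧ t ++ [b] ∈ T := by
            rcases Finset.mem_insert.mp hxp with rfl | h
            · exact ⟨false, rfl, hf⟩
            · exact ⟨true, Finset.mem_singleton.mp h, htr⟩
          obtain ⟨b, rfl, hbT⟩ := hexb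
          have hlen : t.length + 1 ≤ T.sup List.length := by
            simpa using Finset.le_sup (f := List.length) hbT
          refine ih (t ++ [b]) hbT (by simp only [List.length_append,
            List.length_cons, List.length_nil]; omega) ?_
          intro p hp hpne
          rcases prefix_snoc_cases hp with h | rfl
          · exact hpS p h hpne
          · exact hxS
    obtain ⟨ℓ, hℓleaf, hℓS⟩ := key (T.sup List.length) [] hroot (by simp)
      (by intro p hp hpne; exact absurd (List.prefix_nil.mp hp) hpne)
    refine ⟨(Finset.range n).image fun i => ℓ.take (ℓ.length - i), ?_, ?_⟩
    · exact Finset.mem_image_of_mem _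
        (Finset.mem_filter.mpr ⟨hℓleaf.1, hℓleaf, hleaf ℓ hℓleaf⟩)
    · intro x hx
      obtain ⟨i, _, rfl⟩ := Finset.mem_image.mp hx
      by_cases hxe : ℓ.take (ℓ.length - i) = []
      · rw [hxe]; exact Finset.mem_insert_self _ _
      · exact Finset.mem_insert_of_mem (hℓS _ (ℓ.take_prefix _) hxe)
end
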